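/- arXiv:1412.2203 — 10 statements merged into one kernel-verified Lean document; each statement's English description precedes it below -/
import Mathlib

section
/- Let p be a prime, R a Noetherian commutative ring of characteristic p, M a finitely generated R-module, e ≥ 1 an integer, and φ : M → M an additive map satisfying φ(r^{p^e} m) = r φ(m) for all r ∈ R and m ∈ M. Then for every n ≥ 1 the image φ^n(M) of the n-fold composite of φ is an R-submodule of M, the chain φ(M) ⊇ φ²(M) ⊇ φ³(M) ⊇ ⋯ is descending, and there exists n₀ such that φ^n(M) = φ^{n₀}(M) for all n ≥ n₀. -/
set_option maxHeartbeats 1600000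
set_option synthInstance.maxHeartbeats 400000

namespace HSLaux


/-- A bundled `q⁻¹`-semilinear additive map. -/
structure SemiLin (R M : Type*) [CommRing R] [AddCommGroup M] [Module R M] (q : ℕ) where
  toFun : M → M
  add' : ∀ x y : M, toFun (x + y) = toFun x + toFun y
  smul' : ∀ (r : R) (m : M), toFun (r ^ q • m) = r • toFun m

variable {R M : Type*} [CommRing R] [AddCommGroup M] [Module R M] {q : ℕ}
variable (f : SemiLin R M q)

namespace SemiLin

theorem map_zero' : f.toFun 0 = 0 := by
  have h := f.add' 0 0
  rw [add_zero] at h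
  have : f.toFun 0 + 0 = f.toFun 0 + f.toFun 0 := by rw [add_zero, ← h]
  exact (add_left_cancel this).symm

theorem iter_zero (n : ℕ) : f.toFun^[n] 0 = 0 := by
  induction n with
  | zero => rfl
  | succ n ih => rw [Function.iterate_succ_apply, f.map_zero', ih]

theorem iter_add (n : ℕ) (x y : M) :
    f.toFun^[n] (x + y) = f.toFun^[n] x + f.toFun^[n] y := by
  induction n generalizing x y with
  | zero => rfl
  | succ n ih =>
      rw [Function.iterate_succ_apply, f.add', ih, Function.iterate_succ_apply f.toFun n x,
        Function.iterate_succ_apply f.toFun n y]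

theorem iter_smul (n : ℕ) (r : R) (m : M) :
    f.toFun^[n] (r ^ q ^ n • m) = r • f.toFun^[n] m := by
  induction n generalizing m with
  | zero => simp
  | succ n ih =>
      rw [Function.iterate_succ_apply, Function.iterate_succ_apply,
        show r ^ q ^ (n + 1) = (r ^ q ^ n) ^ q by rw [← pow_mul, pow_succ],
        f.smul', ih]

/-- The image `φⁿ(M)` as a submodule. -/
def N (n : ℕ) : Submodule R M where
  carrier := Set.range f.toFun^[n]
  add_mem' := by
    rintro x y ⟨a, rfl⟩ ⟨b, rfl⟩
    exact ⟨a + b, f.iter_add n a b⟩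
  zero_mem' := ⟨0, f.iter_zero n⟩
  smul_mem' := by
    rintro r x ⟨a, rfl⟩
    exact ⟨r ^ q ^ n • a, f.iter_smul n r a⟩

theorem coe_N (n : ℕ) : (f.N n : Set M) = Set.range f.toFun^[n] := rfl

theorem mem_N {n : ℕ} {x : M} : x ∈ f.N n ↔ ∃ y, f.toFun^[n] y = x := Iff.rfl

theorem N_succ_le (n : ℕ) : f.N (n + 1) ≤ f.N n := by
  rintro x ⟨a, rfl⟩
  exact ⟨f.toFun a, (Function.iterate_succ_apply f.toFun n a).symm⟩

theorem N_image {n : ℕ} {x : M} (hx : x ∈ f.N n) : f.toFun x ∈ f.N (n + 1) := by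
  obtain ⟨a, rfl⟩ := hx
  exact ⟨a, Function.iterate_succ_apply' f.toFun n a⟩

theorem N_image_surj {n : ℕ} {y : M} (hy : y ∈ f.N (n + 1)) :
    ∃ x ∈ f.N n, f.toFun x = y := by
  obtain ⟨a, rfl⟩ := hy
  exact ⟨f.toFun^[n] a, ⟨a, rfl⟩, (Function.iterate_succ_apply' f.toFun n a).symm⟩

theorem N_image_set (n : ℕ) :
    (f.N (n + 1) : Set M) = f.toFun '' (f.N n : Set M) := by
  ext x
  constructor
  · rintro ⟨a, rfl⟩
    exact ⟨f.toFun^[n] a, ⟨a, rfl⟩, (Function.iterate_succ_apply' f.toFun n a).symm⟩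
  · rintro ⟨y, ⟨a, rfl⟩, rfl⟩
    exact ⟨a, Function.iterate_succ_apply' f.toFun n a⟩

theorem N_propagate {n : ℕ} (h : f.N n = f.N (n + 1)) :
    ∀ m, n ≤ m → f.N m = f.N n := by
  intro m hm
  induction m with
  | zero => rw [Nat.le_zero.mp hm]
  | succ m ih =>
      rcases Nat.lt_or_ge n (m + 1) with h' | h'
      · have heq : f.N m = f.N n := ih (Nat.lt_succ_iff.mp h')
        have : f.N (m + 1) = f.N (n + 1) := by
          apply SetLike.coe_injective
          rw [f.N_image_set m, f.N_image_set n, heq]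
        rw [this, ← h]
      · have : n = m + 1 := le_antisymm hm h'
        rw [this]


theorem colon_step {n : ℕ} (hq : 1 ≤ q) {r : R}
    (hr : ∀ x ∈ f.N n, r • x ∈ f.N (n + 1)) :
    ∀ x ∈ f.N (n + 1), r • x ∈ f.N (n + 2) := by
  intro x hx
  obtain ⟨y, hy, rfl⟩ := f.N_image_surj hx
  have h1 : r ^ q • y ∈ f.N (n + 1) := by
    have : r ^ q • y = r ^ (q - 1) • (r • y) := by
      rw [smul_smul, ← pow_succ, Nat.sub_add_cancel hq]
    rw [this]
    exact Submodule.smul_mem _ _ (hr y hy)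
  have := f.N_image h1
  rwa [f.smul'] at this

theorem colon_mono (n : ℕ) (hq : 1 ≤ q) :
    (f.N (n + 1)).colon (f.N n) ≤ (f.N (n + 2)).colon (f.N (n + 1)) := by
  intro r hr
  rw [Submodule.mem_colon] at hr ⊢
  exact f.colon_step hq hr

theorem transport {a : ℕ} {s : R}
    (hs : ∀ n, a ≤ n → ∀ x ∈ f.N n, s • x ∈ f.N (n + 1)) :
    ∀ k n, a + k ≤ n → ∀ x ∈ f.N n, s • x ∈ f.N (n + q ^ k) := by
  intro k
  induction k with
  | zero => simpa using hs
  | succ k ihk =>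
      have key : ∀ (j m' : ℕ), a + k ≤ m' → ∀ y ∈ f.N m',
          s ^ j • y ∈ f.N (m' + j * q ^ k) := by
        intro j
        induction j with
        | zero => intro m' _ y hy; simpa using hy
        | succ j ihj =>
            intro m' hm' y hy
            have h1 : s ^ j • y ∈ f.N (m' + j * q ^ k) := ihj m' hm' y hy
            have h2 := ihk (m' + j * q ^ k) (le_trans hm' (Nat.le_add_right _ _))
              _ h1
            have h3 : s • s ^ j • y = s ^ (j + 1) • y := by
              rw [smul_smul, ← pow_succ']
            rw [h3] at h2
            have h4 : m' + j * q ^ k + q ^ k = m' + (j + 1) * q ^ k := by ring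
            rwa [h4] at h2
      intro n hn x hx
      obtain ⟨m, rfl⟩ : ∃ m, n = m + 1 :=
        ⟨n - 1, by omega⟩
      obtain ⟨y, hy, rfl⟩ := f.N_image_surj hx
      have h1 : s ^ q • y ∈ f.N (m + q * q ^ k) := key q m (by omega) y hy
      have h2 := f.N_image h1
      rw [f.smul'] at h2
      have h3 : m + q * q ^ k + 1 = m + 1 + q ^ (k + 1) := by
        rw [pow_succ']; omega
      rwa [h3] at h2

end SemiLin


theorem exists_exp_gt (A D : ℕ) : ∃ k, A * (k + 1) ^ D < 2 ^ k := by
  refine ⟨2 ^ (D + 1) * (A + D + 1), ?_⟩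
  set k := 2 ^ (D + 1) * (A + D + 1) with hk
  have hkpos : 1 ≤ k := by
    have : 1 ≤ 2 ^ (D + 1) := Nat.one_le_two_pow
    calc 1 ≤ 1 * 1 := by norm_num
    _ ≤ 2 ^ (D + 1) * (A + D + 1) := Nat.mul_le_mul this (by omega)
  have h1 : k + 1 ≤ 2 ^ (A + 2 * D + 2) := by
    have e1 : k + 1 ≤ 2 ^ (D + 2) * (A + D + 1) := by
      have : 2 ^ (D + 2) * (A + D + 1) = k + k := by rw [hk]; ring
      omega
    have e2 : A + D + 1 ≤ 2 ^ (A + D) := by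
      have := Nat.lt_two_pow_self (n := A + D); omega
    calc k + 1 ≤ 2 ^ (D + 2) * (A + D + 1) := e1
    _ ≤ 2 ^ (D + 2) * 2 ^ (A + D) := Nat.mul_le_mul_left _ (by have := Nat.lt_two_pow_self (n := A + D); omega)
    _ = 2 ^ (A + 2 * D + 2) := by rw [← pow_add]; ring_nf
  have h2 : A * (k + 1) ^ D ≤ 2 ^ (A + (A + 2 * D + 2) * D) := by
    calc A * (k + 1) ^ D ≤ 2 ^ A * (2 ^ (A + 2 * D + 2)) ^ D :=
      Nat.mul_le_mul (Nat.lt_two_pow_self (n := A)).le (Nat.pow_le_pow_left h1 D)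
    _ = 2 ^ (A + (A + 2 * D + 2) * D) := by rw [← pow_mul, ← pow_add]
  have h3 : A + (A + 2 * D + 2) * D < k := by
    have e3 : 2 * (D + 1) ≤ 2 ^ (D + 1) := by
      have := Nat.lt_two_pow_self (n := D)
      calc 2 * (D + 1) ≤ 2 * 2 ^ D := by omega
      _ = 2 ^ (D + 1) := by ring
    have e4 : 2 * (D + 1) * (A + D + 1) ≤ k := by
      rw [hk]; exact Nat.mul_le_mul_right _ e3
    nlinarith
  calc A * (k + 1) ^ D ≤ 2 ^ (A + (A + 2 * D + 2) * D) := h2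
  _ < 2 ^ k := Nat.pow_lt_pow_right one_lt_two h3

section Lattice
variable {A W : Type*} [CommRing A] [AddCommGroup W] [Module A W]

/-- If two nested submodules agree on all layers of a finite filtration, they are equal. -/
theorem eq_of_layers_eq {X X' : Submodule A W} (hle : X ≤ X') (c : ℕ)
    (Z : ℕ → Submodule A W) (hZ0 : X' ≤ Z 0) (hZc : Z c ≤ X)
    (hlayer : ∀ i < c, X' ⊓ Z i ≤ (X ⊓ Z i) ⊔ Z (i + 1)) : X' ≤ X := by
  have key : ∀ i ≤ c, X' ≤ X ⊔ (X' ⊓ Z i) := by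
    intro i hi
    induction i with
    | zero =>
        intro x hx
        exact Submodule.mem_sup_right (Submodule.mem_inf.mpr ⟨hx, hZ0 hx⟩)
    | succ i ih =>
        intro x hx
        obtain ⟨y, hy, z, hz, rfl⟩ := Submodule.mem_sup.mp (ih (by omega) hx)
        have hz' := hlayer i (by omega) hz
        obtain ⟨w, hw, v, hv, rfl⟩ := Submodule.mem_sup.mp hz'
        have hvX' : v ∈ X' := by
          have hwX' : w ∈ X' := hle (Submodule.mem_inf.mp hw).1
          have : w + v ∈ X' := (Submodule.mem_inf.mp hz).1
          simpa using Submodule.sub_mem _ this hwX'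
        rw [← add_assoc]
        exact Submodule.add_mem_sup (Submodule.add_mem _ hy (Submodule.mem_inf.mp hw).1)
          (Submodule.mem_inf.mpr ⟨hvX', hv⟩)
  have := key c le_rfl
  intro x hx
  obtain ⟨y, hy, z, hz, rfl⟩ := Submodule.mem_sup.mp (this hx)
  exact Submodule.add_mem _ hy (hZc (Submodule.mem_inf.mp hz).2)

/-- If `X < X'` in a sandwich, some layer is strictly bigger. -/
theorem exists_layer_lt {X X' : Submodule A W} (hlt : X < X') (c : ℕ)
    (Z : ℕ → Submodule A W) (hZ0 : X' ≤ Z 0) (hZc : Z c ≤ X) :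
    ∃ i < c, (X ⊓ Z i) ⊔ Z (i + 1) < (X' ⊓ Z i) ⊔ Z (i + 1) := by
  by_contra hcon
  push_neg at hcon
  have hall : ∀ i < c, (X ⊓ Z i) ⊔ Z (i + 1) = (X' ⊓ Z i) ⊔ Z (i + 1) := by
    intro i hi
    refine le_antisymm (sup_le_sup_right (inf_le_inf_right _ hlt.le) _) ?_
    by_contra hnle
    exact hcon i hi (lt_of_le_not_ge (sup_le_sup_right (inf_le_inf_right _ hlt.le) _) hnle)
  have : X' ≤ X := by
    apply eq_of_layers_eq hlt.le c Z hZ0 hZc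
    intro i hi
    calc X' ⊓ Z i ≤ (X' ⊓ Z i) ⊔ Z (i + 1) := le_sup_left
    _ = (X ⊓ Z i) ⊔ Z (i + 1) := (hall i hi).symm
  exact absurd this hlt.not_ge

end Lattice


section Layer
variable {A W : Type*} [CommRing A] [IsLocalRing A] [AddCommGroup W] [Module A W]

open IsLocalRing Submodule

theorem exists_dim_function (Zlo Zhi : Submodule A W) (hz : Zlo ≤ Zhi)
    (hkill : ∀ r ∈ maximalIdeal A, ∀ x ∈ Zhi, r • x ∈ Zlo)
    (g : ℕ) (S : Finset W) (hScard : S.card ≤ g) (hSspan : Submodule.span A ↑S = Zhi) :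
    ∃ d : Submodule A W → ℕ,
      (∀ U U' : Submodule A W, U ≤ U' → d U ≤ d U') ∧
      (∀ U U' : Submodule A W, (U ⊓ Zhi) ⊔ Zlo < (U' ⊓ Zhi) ⊔ Zlo → d U < d U') ∧
      (∀ U, d U ≤ g) := by
  classical
  let π : W →ₗ[A] (W ⧸ Zlo) := Zlo.mkQ
  let V : Submodule A (W ⧸ Zlo) := Zhi.map π
  have htors : Module.IsTorsionBySet A ↥V ↑(maximalIdeal A) := by
    rintro ⟨u, hu⟩ r
    obtain ⟨w, hw, rfl⟩ := Submodule.mem_map.mp hu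
    apply Subtype.ext
    show (r : A) • (π w) = 0
    rw [← map_smul]
    exact (Submodule.Quotient.mk_eq_zero _).mpr (hkill r r.2 w hw)
  letI : Module (ResidueField A) ↥V := htors.module
  have hcoe_smul : ∀ (a : A) (v : ↥V), ((a • v : ↥V) : W ⧸ Zlo) = a • (v : W ⧸ Zlo) :=
    fun a v => rfl
  have hmk_smul : ∀ (a : A) (v : ↥V), (residue A a) • v = a • v :=
    fun a v => htors.mk_smul a v
  let toSub : Submodule A W → Submodule (ResidueField A) ↥V := fun U =>
    { carrier := {v : ↥V | (v : W ⧸ Zlo) ∈ ((U ⊓ Zhi) ⊔ Zlo).map π}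
      add_mem' := by
        intro v w hv hw
        simp only [Set.mem_setOf_eq, Submodule.coe_add] at hv hw ⊢
        exact Submodule.add_mem _ hv hw
      zero_mem' := by
        simp only [Set.mem_setOf_eq, Submodule.coe_zero]
        exact Submodule.zero_mem _
      smul_mem' := by
        intro κ v hv
        obtain ⟨a, rfl⟩ := residue_surjective (R := A) κ
        simp only [Set.mem_setOf_eq] at hv ⊢
        rw [hmk_smul, hcoe_smul]
        exact Submodule.smul_mem _ a hv }
  have htoSub_mem : ∀ U (v : ↥V), v ∈ toSub U ↔ (v : W ⧸ Zlo) ∈ ((U ⊓ Zhi) ⊔ Zlo).map π :=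
    fun U v => Iff.rfl
  have hS_sub : (↑S : Set W) ⊆ Zhi := by rw [← hSspan]; exact Submodule.subset_span
  let b : ↥S → ↥V := fun s => ⟨π s, Submodule.mem_map_of_mem (hS_sub s.2)⟩
  have hspanV : Submodule.span (ResidueField A) (Set.range b) = ⊤ := by
    rw [eq_top_iff]
    rintro ⟨u, hu⟩ -
    have hu' : u ∈ Submodule.span A (π '' ↑S) := by
      rw [← Submodule.map_span, hSspan]; exact hu
    have key : ∀ u', u' ∈ Submodule.span A (π '' ↑S) →
        ∀ h : u' ∈ V, (⟨u', h⟩ : ↥V) ∈ Submodule.span (ResidueField A) (Set.range b) := by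
      intro u' hu'
      induction hu' using Submodule.span_induction with
      | mem x hx =>
          intro h
          obtain ⟨s, hs, rfl⟩ := hx
          exact Submodule.subset_span ⟨⟨s, hs⟩, rfl⟩
      | zero =>
          intro h
          have h0 : (⟨0, h⟩ : ↥V) = 0 := Subtype.ext rfl
          rw [h0]; exact Submodule.zero_mem _
      | add x y hx hy ihx ihy =>
          intro h
          have hxV : x ∈ V := by rw [← Submodule.map_span, hSspan] at hx; exact hx
          have hyV : y ∈ V := by rw [← Submodule.map_span, hSspan] at hy; exact hy
          have hxy : (⟨x + y, h⟩ : ↥V) = ⟨x, hxV⟩ + ⟨y, hyV⟩ := Subtype.ext rfl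
          rw [hxy]; exact Submodule.add_mem _ (ihx hxV) (ihy hyV)
      | smul a x hx ih =>
          intro h
          have hxV : x ∈ V := by rw [← Submodule.map_span, hSspan] at hx; exact hx
          have hax : (⟨a • x, h⟩ : ↥V) = (residue A a) • ⟨x, hxV⟩ := by
            apply Subtype.ext
            rw [hmk_smul, hcoe_smul]
          rw [hax]; exact Submodule.smul_mem _ _ (ih hxV)
    exact key u hu' hu
  haveI hfinV : Module.Finite (ResidueField A) ↥V := by
    refine ⟨⟨(Set.finite_range b).toFinset, ?_⟩⟩
    rw [Set.Finite.coe_toFinset]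
    exact hspanV
  have hdim : Module.finrank (ResidueField A) ↥V ≤ g := by
    have h1 : Module.finrank (ResidueField A) ↥(Submodule.span (ResidueField A) (Set.range b)) ≤
        (Set.range b).toFinset.card := finrank_span_le_card (Set.range b)
    have h2 : (Set.range b).toFinset.card ≤ S.card := by
      rw [Set.toFinset_range]
      exact le_trans (Finset.card_image_le) (by simp)
    have h3 : Module.finrank (ResidueField A) ↥(Submodule.span (ResidueField A) (Set.range b)) =
        Module.finrank (ResidueField A) ↥V := by
      rw [hspanV]; exact finrank_top _ _
    omega
  refine ⟨fun U => Module.finrank (ResidueField A) ↥(toSub U), ?_, ?_, ?_⟩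
  · intro U U' hUU'
    have hle : toSub U ≤ toSub U' := by
      intro v hv
      rw [htoSub_mem] at hv ⊢
      exact Submodule.map_mono (sup_le_sup_right (inf_le_inf_right _ hUU') _) hv
    exact Submodule.finrank_mono hle
  · intro U U' hlt
    have hstrict : toSub U < toSub U' := by
      refine lt_of_le_not_ge ?_ ?_
      · intro v hv
        rw [htoSub_mem] at hv ⊢
        exact Submodule.map_mono hlt.le hv
      · intro hcon
        have hrec : ∀ (L : Submodule A W), Zlo ≤ L →
            Submodule.comap π (Submodule.map π L) = L := by
          intro L hL
          rw [Submodule.comap_map_eq, Submodule.ker_mkQ, sup_eq_left.mpr hL]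
        have hLle : Submodule.map π ((U' ⊓ Zhi) ⊔ Zlo) ≤ Submodule.map π ((U ⊓ Zhi) ⊔ Zlo) := by
          intro u hu
          obtain ⟨w, hw, rfl⟩ := Submodule.mem_map.mp hu
          have hwZhi : w ∈ Zhi := by
            rcases Submodule.mem_sup.mp hw with ⟨x, hx, y, hy, rfl⟩
            exact Submodule.add_mem _ (Submodule.mem_inf.mp hx).2 (hz hy)
          have hmem : (⟨π w, Submodule.mem_map_of_mem hwZhi⟩ : ↥V) ∈ toSub U' :=
            Submodule.mem_map_of_mem hw
          exact (htoSub_mem U _).mp (hcon hmem)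
        have hL'L : (U' ⊓ Zhi) ⊔ Zlo ≤ (U ⊓ Zhi) ⊔ Zlo := by
          intro x hx
          have h1 : π x ∈ Submodule.map π ((U ⊓ Zhi) ⊔ Zlo) :=
            hLle (Submodule.mem_map_of_mem hx)
          have h2 := hrec ((U ⊓ Zhi) ⊔ Zlo) le_sup_right
          have h3 : x ∈ Submodule.comap π (Submodule.map π ((U ⊓ Zhi) ⊔ Zlo)) := h1
          rwa [h2] at h3
        exact hlt.not_ge hL'L
    exact Submodule.finrank_lt_finrank_of_lt hstrict
  · intro U
    exact le_trans (Submodule.finrank_le _) hdim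
end Layer


section Mono
open scoped Classical
variable {A W : Type*} [CommRing A] [AddCommGroup W] [Module A W]

open Submodule

theorem prod_pow_mem (Sm : Finset A) (v : ↥Sm → ℕ) (s : Finset ↥Sm) :
    (∏ x ∈ s, (x : A) ^ (v x)) ∈ (Ideal.span (↑Sm : Set A)) ^ (∑ x ∈ s, v x) := by
  classical
  induction s using Finset.induction_on with
  | empty => simp [Ideal.one_eq_top]
  | insert _ _ hx ih =>
      rename_i a s
      rw [Finset.prod_insert hx, Finset.sum_insert hx, pow_add]
      exact Ideal.mul_mem_mul
        (Ideal.pow_mem_pow (Submodule.subset_span a.2) _) ih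

private def monoP (Sm : Finset A) (v : ↥Sm → ℕ) : A := ∏ x : ↥Sm, (x : A) ^ (v x)

private noncomputable def expF (Sm : Finset A) (i : ℕ) : Finset (↥Sm → ℕ) :=
  (Fintype.piFinset fun _ : ↥Sm => Finset.range (i + 1)).filter fun v => (∑ x : ↥Sm, v x) = i

private noncomputable def monoGens (Sm : Finset A) (SY : Finset W) (i : ℕ) : Finset W :=
  Finset.image (fun p : (↥Sm → ℕ) × W => monoP Sm p.1 • p.2) (expF Sm i ×ˢ SY)

private theorem mem_expF (Sm : Finset A) (i : ℕ) {v : ↥Sm → ℕ} :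
    v ∈ expF Sm i ↔ (∀ a : ↥Sm, v a < i + 1) ∧ (∑ x : ↥Sm, v x) = i := by
  unfold expF
  rw [Finset.mem_filter, Fintype.mem_piFinset]
  simp only [Finset.mem_range]

private theorem card_expF_le (Sm : Finset A) (i : ℕ) :
    (expF Sm i).card ≤ (i + 1) ^ Sm.card := by
  unfold expF
  refine le_trans (Finset.card_filter_le _ _) ?_
  rw [Fintype.card_piFinset]
  simp [Finset.card_range]

private theorem mem_monoGens {Sm : Finset A} {SY : Finset W} {i : ℕ} {w : W} :
    w ∈ monoGens Sm SY i ↔ ∃ v ∈ expF Sm i, ∃ y ∈ SY, monoP Sm v • y = w := by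
  unfold monoGens
  constructor
  · intro hw
    obtain ⟨p, hp, rfl⟩ := Finset.mem_image.mp hw
    obtain ⟨hv, hy⟩ := Finset.mem_product.mp hp
    exact ⟨p.1, hv, p.2, hy, rfl⟩
  · rintro ⟨v, hv, y, hy, rfl⟩
    exact Finset.mem_image.mpr ⟨(v, y), Finset.mem_product.mpr ⟨hv, hy⟩, rfl⟩

private theorem monoGens_le (Sm : Finset A) (SY : Finset W) (i : ℕ) :
    ∀ w ∈ monoGens Sm SY i,
      w ∈ ((Ideal.span (↑Sm : Set A)) ^ i • (Submodule.span A (↑SY : Set W)) : Submodule A W) := by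
  intro w hw
  obtain ⟨v, hv, y, hy, rfl⟩ := mem_monoGens.mp hw
  have hvsum : (∑ x : ↥Sm, v x) = i := ((mem_expF Sm i).mp hv).2
  have hmono : monoP Sm v ∈ (Ideal.span (↑Sm : Set A)) ^ i := by
    rw [← hvsum]; exact prod_pow_mem Sm v Finset.univ
  exact Submodule.smul_mem_smul hmono (Submodule.subset_span hy)

private theorem le_span_monoGens (Sm : Finset A) (SY : Finset W) :
    ∀ i : ℕ,
      ((Ideal.span (↑Sm : Set A)) ^ i • (Submodule.span A (↑SY : Set W)) : Submodule A W) ≤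
        Submodule.span A (↑(monoGens Sm SY i) : Set W) := by
  intro i
  induction i with
  | zero =>
      rw [pow_zero, Ideal.one_eq_top, Submodule.top_smul, Submodule.span_le]
      intro y hy
      have h0 : (0 : ↥Sm → ℕ) ∈ expF Sm 0 := by
        rw [mem_expF]
        exact ⟨fun a => by simp, by simp⟩
      have hmem : (1 : A) • y ∈ monoGens Sm SY 0 := by
        rw [mem_monoGens]
        refine ⟨0, h0, y, hy, by simp [monoP]⟩
      rw [one_smul] at hmem
      exact Submodule.subset_span hmem
  | succ i ih =>
      rw [pow_succ', mul_smul]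
      refine le_trans (smul_mono_right _ ih) ?_
      rw [Submodule.span_smul_span, Submodule.span_le]
      rintro z hz
      simp only [Set.mem_smul] at hz
      obtain ⟨s, hs, t, ht, rfl⟩ := hz
      obtain ⟨v, hv, y, hy, rfl⟩ := mem_monoGens.mp ht
      set idx : ↥Sm := ⟨s, hs⟩ with hidx
      have hids : (idx : A) = s := rfl
      set v' : ↥Sm → ℕ := Function.update v idx (v idx + 1) with hv'
      obtain ⟨hbound, hsum⟩ := (mem_expF Sm i).mp hv
      have hfun : (fun x : ↥Sm => (x : A) ^ (v' x)) =
          Function.update (fun x : ↥Sm => (x : A) ^ (v x)) idx ((idx : A) ^ (v idx + 1)) := by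
        funext x
        by_cases hxi : x = idx
        · subst hxi; rw [hv', Function.update_self, Function.update_self]
        · rw [hv', Function.update_of_ne hxi, Function.update_of_ne hxi]
      have h1 : monoP Sm v' =
          (idx : A) ^ (v idx + 1) * ∏ x ∈ Finset.univ.erase idx, (x : A) ^ (v x) := by
        unfold monoP
        rw [hfun, Finset.prod_update_of_mem (Finset.mem_univ idx),
          Finset.sdiff_singleton_eq_erase]
      have h2 : monoP Sm v =
          (idx : A) ^ (v idx) * ∏ x ∈ Finset.univ.erase idx, (x : A) ^ (v x) := by
        unfold monoP
        rw [← Finset.mul_prod_erase Finset.univ _ (Finset.mem_univ idx)]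
      have hmonoeq : monoP Sm v' = s * monoP Sm v := by
        rw [h1, h2, pow_succ', hids]
        ring
      have hv'mem : v' ∈ expF Sm (i + 1) := by
        rw [mem_expF]
        constructor
        · intro a
          by_cases hxi : a = idx
          · subst hxi
            rw [hv', Function.update_self]
            have := hbound idx
            omega
          · rw [hv', Function.update_of_ne hxi]
            have := hbound a
            omega
        · rw [hv', Finset.sum_update_of_mem (Finset.mem_univ idx),
            Finset.sdiff_singleton_eq_erase]
          have hA := Finset.add_sum_erase Finset.univ v (Finset.mem_univ idx)
          omega
      have hz' : monoP Sm v' • y ∈ monoGens Sm SY (i + 1) := by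
        rw [mem_monoGens]
        exact ⟨v', hv'mem, y, hy, rfl⟩
      have hre : s • monoP Sm v • y = monoP Sm v' • y := by
        rw [hmonoeq, smul_smul]
      rw [hre]
      exact Submodule.subset_span hz'

theorem pow_smul_span (Sm : Finset A) (SY : Finset W) (i : ℕ) :
    ∃ S : Finset W,
      Submodule.span A (↑S : Set W) =
        ((Ideal.span (↑Sm : Set A)) ^ i • (Submodule.span A (↑SY : Set W)) : Submodule A W) ∧
      S.card ≤ SY.card * (i + 1) ^ Sm.card := by
  refine ⟨monoGens Sm SY i, le_antisymm ?_ (le_span_monoGens Sm SY i), ?_⟩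
  · rw [Submodule.span_le]
    intro w hw
    exact monoGens_le Sm SY i w hw
  · unfold monoGens
    calc (Finset.image (fun p : (↥Sm → ℕ) × W => monoP Sm p.1 • p.2) (expF Sm i ×ˢ SY)).card
        ≤ (expF Sm i ×ˢ SY).card := Finset.card_image_le
    _ = (expF Sm i).card * SY.card := Finset.card_product _ _
    _ ≤ (i + 1) ^ Sm.card * SY.card := Nat.mul_le_mul_right _ (card_expF_le Sm i)
    _ = SY.card * (i + 1) ^ Sm.card := Nat.mul_comm _ _
end Mono

section Chain
variable {A W : Type*} [CommRing A] [IsLocalRing A] [AddCommGroup W] [Module A W]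

open IsLocalRing Submodule

theorem chain_bound (Y : Submodule A W) (c T : ℕ) (X : ℕ → Submodule A W)
    (hstrict : ∀ j, j < T → X (j + 1) < X j)
    (hX0 : X 0 ≤ Y) (hXT : (maximalIdeal A) ^ c • Y ≤ X T)
    (G t : ℕ) (SY : Finset W) (hSY : Submodule.span A (↑SY : Set W) = Y) (hG : SY.card ≤ G)
    (Sm : Finset A) (hSm : Ideal.span (↑Sm : Set A) = maximalIdeal A) (ht : Sm.card ≤ t) :
    T ≤ c * (G * (c + 1) ^ t) := by
  classical
  set m : Ideal A := maximalIdeal A with hmdef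
  set Z : ℕ → Submodule A W := fun i => m ^ i • Y with hZdef
  have hZmono : ∀ i, Z (i + 1) ≤ Z i :=
    fun i => Submodule.smul_mono_left (Ideal.pow_le_pow_right (Nat.le_succ i))
  have hZ0 : Z 0 = Y := by
    rw [hZdef]; simp only [pow_zero, Ideal.one_eq_top, Submodule.top_smul]
  have hkill : ∀ i, ∀ r ∈ m, ∀ x ∈ Z i, r • x ∈ Z (i + 1) := by
    intro i r hr x hx
    have h1 : r • x ∈ m • (m ^ i • Y) := Submodule.smul_mem_smul hr hx
    have h2 : m • (m ^ i • Y) = m ^ (i + 1) • Y := by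
      rw [← mul_smul, ← pow_succ']
    rw [hZdef]
    rw [h2] at h1
    exact h1
  have hgens : ∀ i, i < c → ∃ S : Finset W,
      S.card ≤ G * (c + 1) ^ t ∧ Submodule.span A (↑S : Set W) = Z i := by
    intro i hic
    obtain ⟨S, hSspan, hScard⟩ := pow_smul_span Sm SY i
    refine ⟨S, ?_, by rw [hSspan, hSm, hSY]⟩
    calc S.card ≤ SY.card * (i + 1) ^ Sm.card := hScard
      _ ≤ G * (c + 1) ^ t := by
        apply Nat.mul_le_mul hG
        calc (i + 1) ^ Sm.card ≤ (c + 1) ^ Sm.card :=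
          Nat.pow_le_pow_left (by omega) _
        _ ≤ (c + 1) ^ t := Nat.pow_le_pow_right (by omega) ht
  have hdims : ∀ i : ℕ, ∃ d : Submodule A W → ℕ,
      (∀ U U', U ≤ U' → d U ≤ d U') ∧
      (i < c → ∀ U U', (U ⊓ Z i) ⊔ Z (i + 1) < (U' ⊓ Z i) ⊔ Z (i + 1) → d U < d U') ∧
      (∀ U, d U ≤ G * (c + 1) ^ t) := by
    intro i
    by_cases hic : i < c
    · obtain ⟨S, hScard, hSspan⟩ := hgens i hic
      obtain ⟨d, h1, h2, h3⟩ := exists_dim_function (Z (i + 1)) (Z i) (hZmono i)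
        (hkill i) (G * (c + 1) ^ t) S hScard hSspan
      exact ⟨d, h1, fun _ => h2, h3⟩
    · exact ⟨fun _ => 0, fun _ _ _ => le_rfl, fun h => absurd h hic, fun _ => Nat.zero_le _⟩
  choose d hdmono hdstrict hdbound using hdims
  have hchain_le : ∀ j j', j ≤ j' → j' ≤ T → X j' ≤ X j := by
    intro j j' hjj' hj'T
    induction j' with
    | zero => rw [Nat.le_zero.mp hjj']
    | succ n ih =>
        rcases Nat.lt_or_ge j (n + 1) with h' | h'
        · exact le_trans (hstrict n (by omega)).le (ih (by omega) (by omega))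
        · have : j = n + 1 := by omega
          rw [this]
  have hsand_le : ∀ j, j ≤ T → X j ≤ Y :=
    fun j hj => le_trans (hchain_le 0 j (Nat.zero_le _) hj) hX0
  have hsand_ge : ∀ j, j ≤ T → Z c ≤ X j :=
    fun j hj => le_trans hXT (hchain_le j T hj le_rfl)
  have hFdrop : ∀ j, j < T →
      (∑ i ∈ Finset.range c, d i (X (j + 1))) < ∑ i ∈ Finset.range c, d i (X j) := by
    intro j hj
    obtain ⟨i, hic, hlayer⟩ := exists_layer_lt (hstrict j hj) c Z
      (by rw [hZ0]; exact hsand_le j (by omega))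
      (hsand_ge (j + 1) (by omega))
    apply Finset.sum_lt_sum
    · intro i' _
      exact hdmono i' _ _ (hstrict j hj).le
    · exact ⟨i, Finset.mem_range.mpr hic, hdstrict i hic _ _ hlayer⟩
  have hTle : ∀ j, j ≤ T →
      (∑ i ∈ Finset.range c, d i (X j)) + j ≤ ∑ i ∈ Finset.range c, d i (X 0) := by
    intro j hj
    induction j with
    | zero => simp
    | succ n ih =>
        have h1 := hFdrop n (by omega)
        have h2 := ih (by omega)
        omega
  have hfin := hTle T le_rfl
  have hFbound : (∑ i ∈ Finset.range c, d i (X 0)) ≤ c * (G * (c + 1) ^ t) := by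
    calc (∑ i ∈ Finset.range c, d i (X 0)) ≤ ∑ _i ∈ Finset.range c, (G * (c + 1) ^ t) :=
      Finset.sum_le_sum fun i _ => hdbound i _
    _ = c * (G * (c + 1) ^ t) := by
        rw [Finset.sum_const, Finset.card_range, smul_eq_mul]
  omega
end Chain
end HSLaux

namespace HSLaux

section Main
variable {R M : Type*} [CommRing R] [IsNoetherianRing R] [AddCommGroup M] [Module R M]
  [Module.Finite R M]

theorem localized_false {q : ℕ} (hq2 : 2 ≤ q) (f : SemiLin R M q) (a : ℕ)
    (I : Ideal R) (P : Ideal R) [hPp : P.IsPrime] (hIP : I ≤ P)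
    (hPmin : ∀ Q : Ideal R, Q.IsPrime → I ≤ Q → Q ≤ P → P ≤ Q)
    (hIact : ∀ s ∈ I, ∀ n, a ≤ n → ∀ x ∈ f.N n, s • x ∈ f.N (n + 1))
    (htrans : ∀ s ∈ I, ∀ k n, a + k ≤ n → ∀ x ∈ f.N n, s • x ∈ f.N (n + q ^ k))
    (hIget : ∀ n, a ≤ n → ∀ s : R, (∀ x ∈ f.N n, s • x ∈ f.N (n + 1)) → s ∈ I) :
    False := by
  classical
  let Rp := Localization P.primeCompl
  let Mp := LocalizedModule P.primeCompl M
  let fl : M →ₗ[R] Mp := LocalizedModule.mkLinearMap P.primeCompl M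
  haveI : IsNoetherianRing Rp := IsLocalization.isNoetherianRing P.primeCompl Rp inferInstance
  haveI : Module.Finite Rp Mp := Module.Finite.of_isLocalizedModule P.primeCompl fl
  set C : ℕ → Submodule Rp Mp := fun n => (f.N n).localized' Rp P.primeCompl fl with hCdef
  have hCmem : ∀ (n : ℕ) (z : Mp), z ∈ C n ↔
      ∃ x ∈ f.N n, ∃ s : P.primeCompl, IsLocalizedModule.mk' fl x s = z :=
    fun n z => Submodule.mem_localized' Rp P.primeCompl fl (f.N n) z
  have hCmono : ∀ n, C (n + 1) ≤ C n := by
    intro n z hz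
    obtain ⟨x, hx, s, rfl⟩ := (hCmem _ _).mp hz
    exact (hCmem _ _).mpr ⟨x, f.N_succ_le n hx, s, rfl⟩
  have hCstrict : ∀ n, a ≤ n → C (n + 1) < C n := by
    intro n hn
    refine lt_of_le_not_ge (hCmono n) fun hcon => ?_
    obtain ⟨Sg, hSg⟩ := IsNoetherian.noetherian (f.N n)
    have hgen : ∀ x : M, x ∈ Sg → ∃ t : P.primeCompl, (t : R) • x ∈ f.N (n + 1) := by
      intro x hxS
      have hxN : x ∈ f.N n := by
        rw [← hSg]; exact Submodule.subset_span hxS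
      have h1 : IsLocalizedModule.mk' fl x 1 ∈ C n :=
        (hCmem _ _).mpr ⟨x, hxN, 1, rfl⟩
      obtain ⟨y, hy, s, hys⟩ := (hCmem _ _).mp (hcon h1)
      obtain ⟨u, hu⟩ := (IsLocalizedModule.mk'_eq_mk'_iff fl y x s 1).mp hys
      refine ⟨u * s, ?_⟩
      have h2 : (u : R) • (s : R) • x = (u : R) • ((1 : P.primeCompl) : R) • y := by
        exact_mod_cast hu
      rw [show ((1 : P.primeCompl) : R) = (1 : R) from rfl, one_smul] at h2
      have h3 : ((u * s : P.primeCompl) : R) • x = (u : R) • y := by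
        push_cast
        rw [mul_smul]
        exact h2
      rw [h3]
      exact Submodule.smul_mem _ _ hy
    choose tmul htmul using hgen
    set tprod : R := ∏ x ∈ Sg.attach, (tmul (x : M) x.2 : R) with htprod
    have htprodS : tprod ∈ P.primeCompl := by
      rw [htprod]
      exact Submonoid.prod_mem _ fun x _ => (tmul (x : M) x.2).2
    have htp : ∀ x ∈ Sg, tprod • x ∈ f.N (n + 1) := by
      intro x hxS
      have hre : tprod = (∏ y ∈ Sg.attach.erase ⟨x, hxS⟩, (tmul (y : M) y.2 : R)) *
          (tmul x hxS : R) := by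
        rw [htprod]
        exact (Finset.prod_erase_mul Sg.attach (fun y => (tmul (y : M) y.2 : R))
          (Finset.mem_attach Sg ⟨x, hxS⟩)).symm
      rw [hre, mul_smul]
      exact Submodule.smul_mem _ _ (htmul x hxS)
    have htcolon : ∀ z ∈ f.N n, tprod • z ∈ f.N (n + 1) := by
      intro z hz
      rw [← hSg] at hz
      induction hz using Submodule.span_induction with
      | mem w hw => exact htp w hw
      | zero => rw [smul_zero]; exact Submodule.zero_mem _
      | add w₁ w₂ _ _ ih₁ ih₂ => rw [smul_add]; exact Submodule.add_mem _ ih₁ ih₂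
      | smul r w _ ih => rw [smul_comm]; exact Submodule.smul_mem _ _ ih
    exact htprodS (hIP (hIget n hn tprod htcolon))
  set J : Ideal Rp := I.map (algebraMap R Rp) with hJdef
  have hJle : ∀ (n T : ℕ), (∀ s ∈ I, ∀ x ∈ f.N n, s • x ∈ f.N (n + T)) →
      ∀ r ∈ J, ∀ z ∈ C n, r • z ∈ C (n + T) := by
    intro n T hact
    have hcol : J ≤ (C (n + T)).colon (C n) := by
      rw [hJdef, Ideal.map_le_iff_le_comap]
      intro s hs
      show algebraMap R Rp s ∈ (C (n + T)).colon (C n)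
      rw [Submodule.mem_colon]
      intro z hz
      obtain ⟨x, hx, u, rfl⟩ := (hCmem _ _).mp hz
      rw [algebraMap_smul, ← IsLocalizedModule.mk'_smul]
      exact (hCmem _ _).mpr ⟨s • x, hact s hs x hx, u, rfl⟩
    intro r hr z hz
    exact Submodule.mem_colon.mp (hcol hr) z hz
  have hmJ : IsLocalRing.maximalIdeal Rp ≤ J.radical := by
    rw [Ideal.radical_eq_sInf]
    rintro x hx
    rw [Submodule.mem_sInf]
    rintro Q ⟨hJQ, hQp⟩
    haveI := hQp
    have hIQ' : I ≤ Ideal.comap (algebraMap R Rp) Q := Ideal.map_le_iff_le_comap.mp (hJdef ▸ hJQ)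
    have hQ'P : Ideal.comap (algebraMap R Rp) Q ≤ P := by
      intro y hy
      by_contra hyP
      have hunit : IsUnit (algebraMap R Rp y) :=
        IsLocalization.map_units Rp (⟨y, hyP⟩ : P.primeCompl)
      exact hQp.ne_top (Ideal.eq_top_of_isUnit_mem Q hy hunit)
    have hPQ' : P ≤ Ideal.comap (algebraMap R Rp) Q :=
      hPmin _ (Ideal.IsPrime.comap _) hIQ' hQ'P
    have h1 : IsLocalRing.maximalIdeal Rp = P.map (algebraMap R Rp) :=
      (Localization.AtPrime.map_eq_maximalIdeal).symm
    have h2 : P.map (algebraMap R Rp) ≤ Q :=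
      le_trans (Ideal.map_mono hPQ') (Ideal.map_comap_le)
    exact h2 (h1 ▸ hx)
  obtain ⟨c₀, hc₀⟩ := Ideal.exists_radical_pow_le_of_fg J (IsNoetherian.noetherian _)
  have hmc : (IsLocalRing.maximalIdeal Rp) ^ c₀ ≤ J :=
    le_trans (Ideal.pow_right_mono hmJ c₀) hc₀
  have hCcol : ∀ n, a ≤ n → (IsLocalRing.maximalIdeal Rp) ^ c₀ • C n ≤ C (n + 1) := by
    intro n hn
    rw [Submodule.smul_le]
    intro r hr z hz
    exact hJle n 1 (fun s hs x hx => hIact s hs n hn x hx) r (hmc hr) z hz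
  have hCtrans : ∀ k n, a + k ≤ n →
      (IsLocalRing.maximalIdeal Rp) ^ c₀ • C n ≤ C (n + q ^ k) := by
    intro k n hkn
    rw [Submodule.smul_le]
    intro r hr z hz
    exact hJle n (q ^ k) (fun s hs x hx => htrans s hs k n hkn x hx) r (hmc hr) z hz
  obtain ⟨SY, hSY⟩ := IsNoetherian.noetherian (C a)
  obtain ⟨Sm, hSm⟩ := IsNoetherian.noetherian (IsLocalRing.maximalIdeal Rp)
  have hphase1 : ∀ k', (IsLocalRing.maximalIdeal Rp) ^ (c₀ * k') • C a ≤ C (a + k') := by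
    intro k'
    induction k' with
    | zero =>
        rw [Nat.mul_zero, pow_zero, Ideal.one_eq_top, Submodule.top_smul, Nat.add_zero]
    | succ k' ih =>
        have hexp : c₀ * (k' + 1) = c₀ + c₀ * k' := by ring
        rw [hexp, pow_add, mul_smul]
        exact le_trans (smul_mono_right _ ih) (hCcol (a + k') (by omega))
  obtain ⟨k, hk⟩ := exists_exp_gt (SY.card * (c₀ + 1) ^ (Sm.card + 1)) (Sm.card + 1)
  set G : ℕ := SY.card
  set t : ℕ := Sm.card
  set T : ℕ := k + q ^ k with hTdef
  set c : ℕ := c₀ * (k + 1) with hcdef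
  have hXT : (IsLocalRing.maximalIdeal Rp) ^ c • C a ≤ C (a + T) := by
    have hexp : c = c₀ + c₀ * k := by rw [hcdef]; ring
    rw [hexp, pow_add, mul_smul]
    refine le_trans (smul_mono_right _ (hphase1 k)) ?_
    have h2 := hCtrans k (a + k) le_rfl
    have h3 : a + k + q ^ k = a + T := by rw [hTdef]; omega
    rw [h3] at h2
    exact h2
  have hbound := chain_bound (C a) c T (fun j => C (a + j))
    (fun j hj => hCstrict (a + j) (by omega))
    (le_rfl) hXT G t SY hSY le_rfl Sm hSm le_rfl
  have hq2k : 2 ^ k ≤ q ^ k := Nat.pow_le_pow_left hq2 k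
  have hnum : c * (G * (c + 1) ^ t) ≤ G * (c₀ + 1) ^ (t + 1) * (k + 1) ^ (t + 1) := by
    have e1 : c ≤ (c₀ + 1) * (k + 1) := by rw [hcdef]; nlinarith
    have e2 : c + 1 ≤ (c₀ + 1) * (k + 1) := by rw [hcdef]; nlinarith
    calc c * (G * (c + 1) ^ t) ≤ ((c₀ + 1) * (k + 1)) * (G * ((c₀ + 1) * (k + 1)) ^ t) :=
          Nat.mul_le_mul e1 (Nat.mul_le_mul_left _ (Nat.pow_le_pow_left e2 t))
    _ = G * (c₀ + 1) ^ (t + 1) * (k + 1) ^ (t + 1) := by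
          rw [mul_pow, pow_succ, pow_succ]; ring
  have hfin : 2 ^ k < 2 ^ k := by
    calc 2 ^ k ≤ q ^ k := hq2k
    _ ≤ T := by rw [hTdef]; omega
    _ ≤ c * (G * (c + 1) ^ t) := hbound
    _ ≤ G * (c₀ + 1) ^ (t + 1) * (k + 1) ^ (t + 1) := hnum
    _ = (G * (c₀ + 1) ^ (t + 1)) * (k + 1) ^ (t + 1) := by ring
    _ < 2 ^ k := hk
  omega
end Main
end HSLaux

open HSLaux in
/-- Hartshorne–Speiser–Lyubeznik–Gabber stabilization: if `M` is a finitely generated module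
over a Noetherian ring `R` of characteristic `p` and `φ : M → M` is additive and
`p⁻ᵉ`-linear (`φ (r^{pᵉ} • m) = r • φ m`), then each image `φⁿ(M)` is an `R`-submodule,
the chain of images is descending, and it stabilizes. -/
theorem hsl_stabilization (p : ℕ) (hp : p.Prime) (e : ℕ) (he : 1 ≤ e)
    (R : Type*) [CommRing R] [IsNoetherianRing R] [CharP R p]
    (M : Type*) [AddCommGroup M] [Module R M] [Module.Finite R M]
    (φ : M → M) (hadd : ∀ x y : M, φ (x + y) = φ x + φ y)
    (hlin : ∀ (r : R) (m : M), φ (r ^ p ^ e • m) = r • φ m) :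
    (∀ n : ℕ, 1 ≤ n → ∃ N : Submodule R M, (N : Set M) = Set.range φ^[n]) ∧
    (∀ n : ℕ, 1 ≤ n → Set.range φ^[n + 1] ⊆ Set.range φ^[n]) ∧
    (∃ n₀ : ℕ, ∀ n : ℕ, n₀ ≤ n → Set.range φ^[n] = Set.range φ^[n₀]) := by
  classical
  have hq1 : 1 ≤ p ^ e := Nat.one_le_pow _ _ hp.pos
  have hq2 : 2 ≤ p ^ e := le_trans hp.two_le (Nat.le_self_pow (by omega) p)
  let f : SemiLin R M (p ^ e) := ⟨φ, hadd, hlin⟩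
  refine ⟨fun n _ => ⟨f.N n, rfl⟩, ?_, ?_⟩
  · intro n _
    rintro x ⟨y, rfl⟩
    exact ⟨φ y, (Function.iterate_succ_apply φ n y).symm⟩
  by_cases hstab : ∃ n, f.N n = f.N (n + 1)
  · obtain ⟨n, hn⟩ := hstab
    refine ⟨n, fun m hm => ?_⟩
    have h1 := f.N_propagate hn m hm
    have h2 : (f.N m : Set M) = (f.N n : Set M) := by rw [h1]
    exact h2
  exfalso
  push_neg at hstab
  have hlt : ∀ n, f.N (n + 1) < f.N n :=
    fun n => lt_of_le_of_ne (f.N_succ_le n) fun h => hstab n h.symm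
  have hmono : Monotone fun n => (f.N (n + 1)).colon (f.N n) :=
    monotone_nat_of_le_succ fun n => f.colon_mono n hq1
  obtain ⟨a, ha⟩ := monotone_stabilizes_iff_noetherian.mpr
    (inferInstance : IsNoetherian R R) ⟨_, hmono⟩
  set I : Ideal R := (f.N (a + 1)).colon (f.N a) with hIdef
  have haI : ∀ n, a ≤ n → (f.N (n + 1)).colon (f.N n) = I := fun n hn => (ha n hn).symm
  have hIact : ∀ s ∈ I, ∀ n, a ≤ n → ∀ x ∈ f.N n, s • x ∈ f.N (n + 1) := by
    intro s hs n hn x hx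
    have hcol : s ∈ (f.N (n + 1)).colon (f.N n) := (haI n hn) ▸ hs
    exact Submodule.mem_colon.mp hcol x hx
  have htrans : ∀ s ∈ I, ∀ k n, a + k ≤ n → ∀ x ∈ f.N n, s • x ∈ f.N (n + (p ^ e) ^ k) :=
    fun s hs => f.transport (hIact s hs)
  have hIget : ∀ n, a ≤ n → ∀ s : R, (∀ x ∈ f.N n, s • x ∈ f.N (n + 1)) → s ∈ I := by
    intro n hn s hs
    rw [← haI n hn]
    exact Submodule.mem_colon.mpr hs
  have hInotTop : I ≠ ⊤ := by
    intro htop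
    have h1 : (1 : R) ∈ I := htop ▸ trivial
    have h2 : f.N a ≤ f.N (a + 1) := fun x hx => by
      simpa using hIact 1 h1 a le_rfl x hx
    exact (hlt a).not_ge h2
  obtain ⟨Pmax, hPmaxmax, hIPmax⟩ := Ideal.exists_le_maximal I hInotTop
  haveI := hPmaxmax.isPrime
  obtain ⟨P, hPmin, hPle⟩ := Ideal.exists_minimalPrimes_le hIPmax
  haveI : P.IsPrime := hPmin.1.1
  exact localized_false hq2 f a I P hPmin.1.2
    (fun Q hQp hIQ hQP => hPmin.2 ⟨hQp, hIQ⟩ hQP) hIact htrans hIget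
end

section
/- Let p be a prime, k a perfect field of characteristic p, S = k[x₀,…,xₙ] a polynomial ring, I ⊆ S a homogeneous ideal with I ≠ S, R = S/I, and m = (x₀,…,xₙ). Write I^{[p]} for the ideal of S generated by {a^p : a ∈ I} and m^{[p]} = (x₀^p,…,xₙ^p). Then R is F-split if and only if the colon ideal (I^{[p]} : I) is not contained in m^{[p]}. -/
open MvPolynomial

namespace Fedder

variable (p : ℕ) [Fact p.Prime] {k : Type*} [Field k] [CharP k p] [PerfectRing k p] (n : ℕ)

local notation "S" => MvPolynomial (Fin (n+1)) k

noncomputable def pt (c : k) : k := (frobeniusEquiv k p).symm c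

variable {p}

lemma pt_pow (c : k) : pt p c ^ p = c := by
  have := (frobeniusEquiv k p).apply_symm_apply c
  rwa [frobeniusEquiv_def] at this

lemma pt_frob (c : k) : pt p (c ^ p) = c := by
  have := (frobeniusEquiv k p).symm_apply_apply c
  rwa [frobeniusEquiv_def] at this

lemma pt_add (c d : k) : pt p (c + d) = pt p c + pt p d := map_add _ _ _

lemma pt_zero : pt p (0 : k) = 0 := map_zero _

lemma pt_one : pt p (1 : k) = 1 := map_one _

lemma pt_mul (c d : k) : pt p (c * d) = pt p c * pt p d := map_mul _ _ _

lemma pt_ne_zero {c : k} (hc : c ≠ 0) : pt p c ≠ 0 := by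
  intro h
  exact hc (by simpa using (frobeniusEquiv k p).symm.injective (h.trans pt_zero.symm))

variable (p)

noncomputable def pm1 : Fin (n+1) →₀ ℕ := Finsupp.equivFunOnFinite.symm fun _ => p - 1

@[simp] lemma pm1_apply (i : Fin (n+1)) : pm1 p n i = p - 1 := rfl

variable {p n}

lemma hp_pos [Fact p.Prime] : 0 < p := (Fact.out : p.Prime).pos

lemma decomp_iff (q a : Fin (n+1) →₀ ℕ) :
    ((∀ i, a i % p = p - 1) ∧ a.mapRange (· / p) (Nat.zero_div _) = q)
      ↔ a = p • q + pm1 p n := by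
  constructor
  · rintro ⟨h1, rfl⟩
    ext i
    simp only [Finsupp.add_apply, Finsupp.smul_apply, Finsupp.mapRange_apply, smul_eq_mul,
      pm1_apply]
    rw [← h1 i]
    exact (Nat.div_add_mod (a i) p).symm
  · rintro rfl
    have hp : 0 < p := hp_pos
    have hlt : p - 1 < p := Nat.sub_lt hp one_pos
    constructor
    · intro i
      simp only [Finsupp.add_apply, Finsupp.smul_apply, smul_eq_mul, pm1_apply]
      rw [Nat.mul_add_mod, Nat.mod_eq_of_lt hlt]
    · ext i
      simp only [Finsupp.mapRange_apply, Finsupp.add_apply, Finsupp.smul_apply, smul_eq_mul,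
        pm1_apply]
      rw [Nat.mul_add_div hp, Nat.div_eq_of_lt hlt, add_zero]

variable (p n) in
noncomputable def u0 (f : S) : S :=
  ∑ a ∈ f.support,
    if ∀ i, a i % p = p - 1 then
      monomial (a.mapRange (· / p) (Nat.zero_div _)) (pt p (coeff a f))
    else 0

lemma coeff_u0 (f : S) (q : Fin (n+1) →₀ ℕ) :
    coeff q (u0 p n f) = pt p (coeff (p • q + pm1 p n) f) := by
  classical
  rw [u0, coeff_sum]
  have : ∀ a ∈ f.support,
      coeff q (if ∀ i, a i % p = p - 1 then
        monomial (a.mapRange (· / p) (Nat.zero_div _)) (pt p (coeff a f)) else 0)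
      = if a = p • q + pm1 p n then pt p (coeff a f) else 0 := by
    intro a _
    by_cases h1 : ∀ i, a i % p = p - 1
    · rw [if_pos h1, coeff_monomial]
      by_cases h3 : a.mapRange (· / p) (Nat.zero_div _) = q
      · rw [if_pos ((decomp_iff q a).mp ⟨h1, h3⟩), if_pos h3]
      · rw [if_neg fun h4 => h3 ((decomp_iff q a).mpr h4).2, if_neg h3]
    · rw [if_neg h1, coeff_zero, if_neg fun h4 => h1 ((decomp_iff q a).mpr h4).1]
  rw [Finset.sum_congr rfl this]
  by_cases h : (p • q + pm1 p n) ∈ f.support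
  · rw [Finset.sum_ite_eq' f.support _ (fun a => pt p (coeff a f)), if_pos h]
  · rw [Finset.sum_ite_eq' f.support _ (fun a => pt p (coeff a f)), if_neg h]
    rw [notMem_support_iff] at h
    rw [h, pt_zero]


variable (p n) in
noncomputable def u : MvPolynomial (Fin (n+1)) k →+ MvPolynomial (Fin (n+1)) k where
  toFun := u0 p n
  map_zero' := by
    apply MvPolynomial.ext
    intro q
    rw [coeff_u0, coeff_zero, coeff_zero, pt_zero]
  map_add' f g := by
    apply MvPolynomial.ext
    intro q
    rw [coeff_add, coeff_u0, coeff_u0, coeff_u0, coeff_add, pt_add]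

lemma coeff_u (f : S) (q : Fin (n+1) →₀ ℕ) :
    coeff q (u p n f) = pt p (coeff (p • q + pm1 p n) f) := coeff_u0 f q

lemma u_monomial (e : Fin (n+1) →₀ ℕ) (c : k) :
    u p n (monomial e c) =
      if ∀ i, e i % p = p - 1 then
        monomial (e.mapRange (· / p) (Nat.zero_div _)) (pt p c)
      else 0 := by
  apply MvPolynomial.ext
  intro q
  rw [coeff_u, coeff_monomial]
  by_cases h : e = p • q + pm1 p n
  · obtain ⟨h1, h2⟩ := (decomp_iff q e).mpr h
    rw [if_pos h, if_pos h1, coeff_monomial, if_pos h2]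
  · rw [if_neg h, pt_zero]
    by_cases h1 : ∀ i, e i % p = p - 1
    · rw [if_pos h1, coeff_monomial,
        if_neg fun h2 => h ((decomp_iff q e).mp ⟨h1, h2⟩)]
    · rw [if_neg h1, coeff_zero]

lemma smul_le_smul_add_pm1_iff (a q : Fin (n+1) →₀ ℕ) :
    p • a ≤ p • q + pm1 p n ↔ a ≤ q := by
  have hp : 0 < p := hp_pos
  rw [Finsupp.le_def, Finsupp.le_def]
  apply forall_congr'
  intro i
  simp only [Finsupp.smul_apply, Finsupp.add_apply, smul_eq_mul, pm1_apply]
  constructor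
  · intro h
    have : p * a i < p * (q i + 1) := lt_of_le_of_lt h (by
      rw [Nat.mul_add, Nat.mul_one]
      exact Nat.add_lt_add_left (Nat.sub_lt hp one_pos) _)
    exact Nat.lt_succ_iff.mp (Nat.lt_of_mul_lt_mul_left this)
  · intro h
    exact le_add_right (Nat.mul_le_mul_left p h)

lemma smul_add_pm1_sub (a q : Fin (n+1) →₀ ℕ) (h : a ≤ q) :
    p • q + pm1 p n - p • a = p • (q - a) + pm1 p n := by
  ext i
  have hi : a i ≤ q i := h i
  simp only [Finsupp.tsub_apply, Finsupp.add_apply, Finsupp.smul_apply, smul_eq_mul, pm1_apply]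
  rw [Nat.sub_eq_iff_eq_add (le_add_right (Nat.mul_le_mul_left p hi))]
  rw [add_right_comm, ← Nat.mul_add, Nat.sub_add_cancel hi]

lemma u_monomial_pow_mul (a : Fin (n+1) →₀ ℕ) (c : k) (f : S) :
    u p n ((monomial a c) ^ p * f) = monomial a c * u p n f := by
  apply MvPolynomial.ext
  intro q
  rw [coeff_u, monomial_pow, coeff_monomial_mul', coeff_monomial_mul']
  by_cases h : a ≤ q
  · rw [if_pos h, if_pos ((smul_le_smul_add_pm1_iff a q).mpr h),
      smul_add_pm1_sub a q h, pt_mul, pt_frob, coeff_u]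
  · rw [if_neg h, if_neg fun hh => h ((smul_le_smul_add_pm1_iff a q).mp hh), pt_zero]

lemma u_pow_mul (s f : S) : u p n (s ^ p * f) = s * u p n f := by
  conv_lhs => rw [as_sum s]
  conv_rhs => rw [as_sum s]
  rw [← frobenius_def, map_sum, Finset.sum_mul, map_sum, Finset.sum_mul]
  refine Finset.sum_congr rfl fun a _ => ?_
  rw [frobenius_def, u_monomial_pow_mul]

lemma u_of_isHomogeneous {f : S} (hf : f.IsHomogeneous ((pm1 p n).degree)) :
    u p n f = C (pt p (coeff (pm1 p n) f)) := by
  apply MvPolynomial.ext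
  intro q
  rw [coeff_u, coeff_C]
  by_cases h : q = 0
  · subst h
    rw [if_pos rfl, smul_zero, zero_add]
  · rw [if_neg (Ne.symm h), hf.coeff_eq_zero, pt_zero]
    intro hcon
    rw [Finsupp.degree_eq_weight_one, map_add] at hcon
    have h2 : (Finsupp.weight (fun _ : Fin (n+1) => (1 : ℕ))) (p • q) = 0 := by omega
    rw [AddMonoidHom.map_nsmul, smul_eq_mul, Nat.mul_eq_zero] at h2
    rcases h2 with h2 | h2
    · exact absurd h2 (Nat.pos_iff_ne_zero.mp hp_pos)
    · exact h (by rwa [← Finsupp.degree_eq_weight_one, Finsupp.degree_eq_zero_iff] at h2)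


lemma prod_X_pow (s : Fin (n+1) →₀ ℕ) :
    (∏ i, X i ^ s i : S) = monomial s 1 := by
  rw [← prod_X_pow_eq_monomial]
  exact (Finset.prod_subset (Finset.subset_univ _) fun i _ hi => by
    rw [Finsupp.notMem_support_iff.mp hi, pow_zero]).symm

variable (p n) in
noncomputable def Xr (r : Fin (n+1) → Fin p) : S := ∏ i, X i ^ (r i : ℕ)

variable (p n) in
noncomputable def Xc (r : Fin (n+1) → Fin p) : S := ∏ i, X i ^ (p - 1 - (r i : ℕ))

lemma Xr_eq (r : Fin (n+1) → Fin p) :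
    Xr p n (k := k) r = monomial (Finsupp.equivFunOnFinite.symm fun i => (r i : ℕ)) 1 := by
  rw [Xr, ← prod_X_pow]
  rfl

lemma Xc_mul_Xr (r r₀ : Fin (n+1) → Fin p) :
    Xc p n (k := k) r * Xr p n r₀
      = monomial (Finsupp.equivFunOnFinite.symm fun i => (p - 1 - (r i : ℕ)) + (r₀ i : ℕ)) 1 := by
  rw [Xc, Xr, ← Finset.prod_mul_distrib, ← prod_X_pow]
  exact Finset.prod_congr rfl fun i _ => by rw [← pow_add]; rfl

lemma u_kron (r r₀ : Fin (n+1) → Fin p) :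
    u p n (Xc p n (k := k) r * Xr p n r₀) = if r = r₀ then 1 else 0 := by
  have hp : 0 < p := hp_pos
  rw [Xc_mul_Xr, u_monomial]
  by_cases h : r = r₀
  · subst h
    rw [if_pos, if_pos rfl]
    · have hz : (Finsupp.equivFunOnFinite.symm fun i =>
          (p - 1 - (r i : ℕ)) + (r i : ℕ)).mapRange (· / p) (Nat.zero_div _) = 0 := by
        ext i
        simp only [Finsupp.mapRange_apply, Finsupp.coe_equivFunOnFinite_symm,
          Finsupp.coe_zero, Pi.zero_apply]
        have : (r i : ℕ) < p := (r i).isLt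
        have : (p - 1 - (r i : ℕ)) + (r i : ℕ) = p - 1 := by omega
        rw [this]
        exact Nat.div_eq_of_lt (by omega)
      rw [hz, pt_one, monomial_zero', C_1]
    · intro i
      simp only [Finsupp.coe_equivFunOnFinite_symm]
      have : (r i : ℕ) < p := (r i).isLt
      have he : (p - 1 - (r i : ℕ)) + (r i : ℕ) = p - 1 := by omega
      rw [he, Nat.mod_eq_of_lt (by omega)]
  · rw [if_neg h, if_neg]
    intro hall
    apply h
    funext i
    have hi := hall i
    simp only [Finsupp.coe_equivFunOnFinite_symm] at hi
    have h1 : (r i : ℕ) < p := (r i).isLt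
    have h2 : (r₀ i : ℕ) < p := (r₀ i).isLt
    have : (r i : ℕ) = (r₀ i : ℕ) := by
      rcases Nat.lt_or_ge ((p - 1 - (r i : ℕ)) + (r₀ i : ℕ)) p with hlt | hge
      · rw [Nat.mod_eq_of_lt hlt] at hi
        omega
      · rw [Nat.mod_eq_sub_mod hge, Nat.mod_eq_of_lt (by omega)] at hi
        omega
    exact Fin.ext this

lemma monomial_decomp (a : Fin (n+1) →₀ ℕ) (c : k) :
    (monomial a c : S)
      = (monomial (a.mapRange (· / p) (Nat.zero_div _)) (pt p c)) ^ p
          * Xr p n (fun i => ⟨a i % p, Nat.mod_lt _ hp_pos⟩) := by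
  rw [Xr_eq, monomial_pow, monomial_mul, mul_one, pt_pow]
  have hexp : p • a.mapRange (· / p) (Nat.zero_div _)
      + Finsupp.equivFunOnFinite.symm (fun i => ((⟨a i % p, Nat.mod_lt _ hp_pos⟩ : Fin p) : ℕ)) = a := by
    ext i
    simp only [Finsupp.add_apply, Finsupp.smul_apply, Finsupp.mapRange_apply, smul_eq_mul,
      Finsupp.coe_equivFunOnFinite_symm]
    exact Nat.div_add_mod (a i) p
  rw [hexp]

lemma frobenius_decomp (h : S) :
    h = ∑ r : Fin (n+1) → Fin p, (u p n (h * Xc p n r)) ^ p * Xr p n r := by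
  induction h using MvPolynomial.induction_on' with
  | add f g hf hg =>
    conv_lhs => rw [hf, hg]
    rw [← Finset.sum_add_distrib]
    refine Finset.sum_congr rfl fun r _ => ?_
    rw [add_mul, map_add, add_pow_char, add_mul]
  | monomial a c =>
    have key : ∀ r : Fin (n+1) → Fin p,
        (u p n ((monomial a c : S) * Xc p n r)) ^ p * Xr p n r
          = if r = (fun i => ⟨a i % p, Nat.mod_lt _ hp_pos⟩) then monomial a c else 0 := by
      intro r
      rw [show (monomial a c : S) * Xc p n r
            = (monomial (a.mapRange (· / p) (Nat.zero_div _)) (pt p c)) ^ p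
                * (Xc p n r * Xr p n (fun i => ⟨a i % p, Nat.mod_lt _ hp_pos⟩)) by
          conv_lhs => rw [monomial_decomp (p := p) a c]
          ring]
      rw [u_pow_mul, u_kron]
      by_cases h : r = (fun i => ⟨a i % p, Nat.mod_lt _ hp_pos⟩)
      · rw [if_pos h, mul_one, if_pos h, h, ← monomial_decomp]
      · rw [if_neg h, if_neg h, mul_zero, zero_pow (Nat.pos_iff_ne_zero.mp hp_pos), zero_mul]
    rw [Finset.sum_congr rfl fun r _ => key r, Finset.sum_ite_eq' Finset.univ _
      (fun _ => (monomial a c : S)), if_pos (Finset.mem_univ _)]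


section Ideals

variable {I : Ideal (MvPolynomial (Fin (n+1)) k)}

variable (p n) in
noncomputable def Ip (I : Ideal (MvPolynomial (Fin (n+1)) k)) : Ideal (MvPolynomial (Fin (n+1)) k) :=
  Ideal.span ((fun a => a ^ p) '' (I : Set (MvPolynomial (Fin (n+1)) k)))

variable (p n) in
noncomputable def mp : Ideal (MvPolynomial (Fin (n+1)) k) :=
  Ideal.span (Set.range fun i : Fin (n + 1) => (X i : MvPolynomial (Fin (n+1)) k) ^ p)

variable (n) in
noncomputable def mm : Ideal (MvPolynomial (Fin (n+1)) k) :=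
  Ideal.span (Set.range fun i : Fin (n + 1) => (X i : MvPolynomial (Fin (n+1)) k))

lemma u_mul_mem {h : S} (hh : h ∈ Ip p n I) (s : S) : u p n (s * h) ∈ I := by
  induction hh using Submodule.span_induction generalizing s with
  | mem x hx =>
    obtain ⟨a, ha, rfl⟩ := hx
    rw [mul_comm, u_pow_mul]
    exact Ideal.mul_mem_right _ I ha
  | zero => rw [mul_zero, map_zero]; exact zero_mem I
  | add x y _ _ ihx ihy => rw [mul_add, map_add]; exact add_mem (ihx s) (ihy s)
  | smul t x _ ih =>
    rw [smul_eq_mul, ← mul_assoc]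
    exact ih (s * t)

lemma homogeneousComponent_mul_right {g h : S} {e : ℕ} (hh : h.IsHomogeneous e) (m : ℕ) :
    homogeneousComponent m (g * h)
      = if e ≤ m then homogeneousComponent (m - e) g * h else 0 := by
  by_cases hem : e ≤ m
  · rw [if_pos hem]
    apply MvPolynomial.ext
    intro a
    rw [coeff_homogeneousComponent, coeff_mul, coeff_mul]
    by_cases hd : a.degree = m
    · rw [if_pos hd]
      refine Finset.sum_congr rfl fun bc hbc => ?_
      rw [coeff_homogeneousComponent]
      by_cases hch : coeff bc.2 h = 0
      · rw [hch, mul_zero, mul_zero]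
      · have hc : bc.2.degree = e := by
          rw [Finsupp.degree_eq_weight_one]; exact hh hch
        have habc : bc.1 + bc.2 = a := Finset.HasAntidiagonal.mem_antidiagonal.mp hbc
        have hsum : bc.1.degree + bc.2.degree = a.degree := by
          rw [← habc, Finsupp.degree_eq_weight_one, map_add]
        rw [if_pos (by omega)]
    · rw [if_neg hd]
      refine (Finset.sum_eq_zero fun bc hbc => ?_).symm
      rw [coeff_homogeneousComponent]
      by_cases hch : coeff bc.2 h = 0
      · rw [hch, mul_zero]
      · have hc : bc.2.degree = e := by
          rw [Finsupp.degree_eq_weight_one]; exact hh hch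
        have habc : bc.1 + bc.2 = a := Finset.HasAntidiagonal.mem_antidiagonal.mp hbc
        have hsum : bc.1.degree + bc.2.degree = a.degree := by
          rw [← habc, Finsupp.degree_eq_weight_one, map_add]
        rw [if_neg (by omega), zero_mul]
  · rw [if_neg hem]
    apply MvPolynomial.ext
    intro a
    rw [coeff_homogeneousComponent, coeff_zero]
    by_cases hd : a.degree = m
    · rw [if_pos hd, coeff_mul]
      refine Finset.sum_eq_zero fun bc hbc => ?_
      by_cases hch : coeff bc.2 h = 0
      · rw [hch, mul_zero]
      · have hc : bc.2.degree = e := by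
          rw [Finsupp.degree_eq_weight_one]; exact hh hch
        have habc : bc.1 + bc.2 = a := Finset.HasAntidiagonal.mem_antidiagonal.mp hbc
        have hsum : bc.1.degree + bc.2.degree = a.degree := by
          rw [← habc, Finsupp.degree_eq_weight_one, map_add]
        omega
    · rw [if_neg hd]

lemma Ip_component (hhom : ∀ f ∈ I, ∀ d : ℕ, homogeneousComponent d f ∈ I)
    {h : S} (hh : h ∈ Ip p n I) (d : ℕ) : homogeneousComponent d h ∈ Ip p n I := by
  induction hh using Submodule.span_induction generalizing d with
  | mem x hx =>
    obtain ⟨a, ha, rfl⟩ := hx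
    have hsum : a ^ p = ∑ i ∈ Finset.range (a.totalDegree + 1),
        (homogeneousComponent i a) ^ p := by
      conv_lhs => rw [← sum_homogeneousComponent a, ← frobenius_def, map_sum]
      exact Finset.sum_congr rfl fun i _ => by rw [frobenius_def]
    show (homogeneousComponent d) (a ^ p) ∈ Ip p n I
    rw [hsum, map_sum]
    refine sum_mem fun i _ => ?_
    rw [homogeneousComponent_of_mem
      ((mem_homogeneousSubmodule _ _).mpr ((homogeneousComponent_isHomogeneous i a).pow p))]
    split_ifs with hd
    · exact Ideal.subset_span ⟨homogeneousComponent i a, hhom a ha i, rfl⟩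
    · exact zero_mem _
  | zero => rw [map_zero]; exact zero_mem _
  | add x y _ _ ihx ihy => rw [map_add]; exact add_mem (ihx d) (ihy d)
  | smul t x hx ih =>
    rw [smul_eq_mul]
    have hx2 : homogeneousComponent d (t * x) = ∑ i ∈ Finset.range (x.totalDegree + 1),
        homogeneousComponent d (t * homogeneousComponent i x) := by
      conv_lhs => rw [← sum_homogeneousComponent x]
      rw [Finset.mul_sum, map_sum]
    rw [hx2]
    refine sum_mem fun i _ => ?_
    rw [homogeneousComponent_mul_right (homogeneousComponent_isHomogeneous i x)]
    split_ifs with hle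
    · exact Ideal.mul_mem_left _ _ (ih i)
    · exact zero_mem _

lemma colon_component (hhom : ∀ f ∈ I, ∀ d : ℕ, homogeneousComponent d f ∈ I)
    {g : S} (hg : g ∈ Submodule.colon (Ip p n I) I) (d : ℕ) :
    homogeneousComponent d g ∈ Submodule.colon (Ip p n I) I := by
  rw [Submodule.mem_colon]
  intro f hf
  rw [smul_eq_mul]
  have hf2 : homogeneousComponent d g * f = ∑ i ∈ Finset.range (f.totalDegree + 1),
      homogeneousComponent d g * homogeneousComponent i f := by
    conv_lhs => rw [← sum_homogeneousComponent f]
    rw [Finset.mul_sum]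
  rw [hf2]
  refine sum_mem fun i _ => ?_
  have h1 : homogeneousComponent d g * homogeneousComponent i f
      = homogeneousComponent (d + i) (g * homogeneousComponent i f) := by
    rw [homogeneousComponent_mul_right (homogeneousComponent_isHomogeneous i f),
      if_pos (Nat.le_add_left i d), Nat.add_sub_cancel]
  rw [h1]
  exact Ip_component hhom
    (Submodule.mem_colon.mp hg _ (hhom f hf i)) _

lemma exists_good_monomial {g : S} (hg : g ∉ mp p n (k := k)) :
    ∃ a ∈ g.support, ∀ i, a i ≤ p - 1 := by
  by_contra hcon
  push_neg at hcon
  apply hg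
  rw [mp]
  nth_rewrite 1 [as_sum g]
  refine sum_mem fun a ha => ?_
  obtain ⟨i, hi⟩ := hcon a ha
  have hpi : p ≤ a i := by
    have := hp_pos (p := p)
    omega
  have hexp : Finsupp.single i p + (a - Finsupp.single i p) = a := by
    ext j
    simp only [Finsupp.add_apply, Finsupp.tsub_apply, Finsupp.single_apply]
    split_ifs with h
    · subst h; omega
    · omega
  have : (monomial a (coeff a g) : S)
      = X i ^ p * monomial (a - Finsupp.single i p) (coeff a g) := by
    rw [X_pow_eq_monomial, monomial_mul, one_mul, hexp]
  rw [this]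
  exact Ideal.mul_mem_right _ _ (Ideal.subset_span ⟨i, rfl⟩)

lemma u_mp_mem {g : S} (hg : g ∈ mp p n (k := k)) : u p n g ∈ mm n (k := k) := by
  rw [mp, Ideal.mem_span_range_iff_exists_fun] at hg
  obtain ⟨c, hc⟩ := hg
  rw [← hc, map_sum]
  refine sum_mem fun i _ => ?_
  rw [mul_comm, u_pow_mul]
  exact Ideal.mul_mem_right _ _ (Ideal.subset_span ⟨i, rfl⟩)

lemma constantCoeff_of_mem_mm {f : S} (hf : f ∈ mm n (k := k)) : constantCoeff f = 0 := by
  have hle : mm n (k := k) ≤ RingHom.ker (constantCoeff (σ := Fin (n+1)) (R := k)) := by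
    rw [mm, Ideal.span_le]
    rintro x ⟨i, rfl⟩
    simp only [SetLike.mem_coe, RingHom.mem_ker, constantCoeff_X]
  exact hle hf

lemma constantCoeff_of_mem_I (hI : I ≠ ⊤)
    (hhom : ∀ f ∈ I, ∀ d : ℕ, homogeneousComponent d f ∈ I)
    {f : S} (hf : f ∈ I) : constantCoeff f = 0 := by
  by_contra hc
  have h0 : homogeneousComponent 0 f ∈ I := hhom f hf 0
  rw [homogeneousComponent_zero] at h0
  refine hI (Ideal.eq_top_of_isUnit_mem I h0 ?_)
  refine IsUnit.of_mul_eq_one (C (coeff 0 f)⁻¹) ?_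
  rw [← C_mul, mul_inv_cancel₀ (by rwa [constantCoeff_eq] at hc), C_1]

end Ideals

end Fedder

set_option maxHeartbeats 1000000 in
set_option synthInstance.maxHeartbeats 1000000 in
open Fedder in
/-- Fedder's criterion: for a homogeneous ideal `I` of `S = k[x₀,…,xₙ]` over a perfect field
of characteristic `p`, the quotient `R = S/I` is F-split if and only if
`(I^{[p]} : I) ⊄ m^{[p]}`, where `m = (x₀,…,xₙ)`. -/
theorem fedders_criterion (p : ℕ) [Fact p.Prime] (k : Type*) [Field k] [CharP k p]
    [PerfectRing k p] (n : ℕ) (I : Ideal (MvPolynomial (Fin (n + 1)) k)) (hI : I ≠ ⊤)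
    (hhom : ∀ f ∈ I, ∀ d : ℕ, homogeneousComponent d f ∈ I) :
    (∃ φ : (MvPolynomial (Fin (n + 1)) k ⧸ I) → (MvPolynomial (Fin (n + 1)) k ⧸ I),
        (∀ x y, φ (x + y) = φ x + φ y) ∧ (∀ r x, φ (r ^ p * x) = r * φ x) ∧ φ 1 = 1)
      ↔ ¬ (Submodule.colon (Ideal.span ((fun a => a ^ p) '' (I : Set (MvPolynomial (Fin (n + 1)) k)))) I ≤
            Ideal.span (Set.range fun i : Fin (n + 1) => (X i : MvPolynomial (Fin (n + 1)) k) ^ p)) := by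
  classical
  have hIp : Ideal.span ((fun a => a ^ p) '' (I : Set (MvPolynomial (Fin (n + 1)) k)))
      = Ip p n I := rfl
  have hmp : Ideal.span (Set.range fun i : Fin (n + 1) =>
      (X i : MvPolynomial (Fin (n + 1)) k) ^ p) = mp p n (k := k) := rfl
  rw [hIp, hmp]
  have hmk : Function.Surjective (Ideal.Quotient.mk I) := Ideal.Quotient.mk_surjective
  constructor
  · rintro ⟨φ, hadd, hsemi, hone⟩ hle
    have hφ0 : φ 0 = 0 := by
      have h := hadd 0 0
      rw [add_zero] at h
      exact (left_eq_add.mp h)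
    set t : (Fin (n+1) → Fin p) → MvPolynomial (Fin (n+1)) k :=
      fun r => (hmk (φ (Ideal.Quotient.mk I (Xr p n r)))).choose with ht_def
    have ht : ∀ r, Ideal.Quotient.mk I (t r) = φ (Ideal.Quotient.mk I (Xr p n r)) :=
      fun r => (hmk (φ (Ideal.Quotient.mk I (Xr p n r)))).choose_spec
    set g : MvPolynomial (Fin (n+1)) k :=
      ∑ r : Fin (n+1) → Fin p, (t r) ^ p * Xc p n r with hg_def
    -- Claim B
    have claimB : ∀ r₀ : Fin (n+1) → Fin p, u p n (g * Xr p n r₀) = t r₀ := by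
      intro r₀
      rw [hg_def, Finset.sum_mul, map_sum]
      have : ∀ r : Fin (n+1) → Fin p,
          u p n ((t r) ^ p * Xc p n r * Xr p n r₀) = if r = r₀ then t r else 0 := by
        intro r
        rw [mul_assoc, u_pow_mul, u_kron]
        split_ifs with h
        · rw [mul_one]
        · rw [mul_zero]
      rw [Finset.sum_congr rfl fun r _ => this r, Finset.sum_ite_eq' Finset.univ r₀ t,
        if_pos (Finset.mem_univ _)]
    -- Claim A
    have claimA : ∀ x, Ideal.Quotient.mk I (u p n (g * x)) = φ (Ideal.Quotient.mk I x) := by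
      intro x
      induction x using MvPolynomial.induction_on' with
      | add f f' hf hf' =>
        rw [mul_add, map_add, map_add (Ideal.Quotient.mk I) (u p n (g * f)) (u p n (g * f')),
          hf, hf', map_add (Ideal.Quotient.mk I) f f', hadd]
      | monomial a c =>
        set M : MvPolynomial (Fin (n+1)) k :=
          monomial (a.mapRange (· / p) (Nat.zero_div _)) (pt p c) with hM
        set r₀ : Fin (n+1) → Fin p := fun i => ⟨a i % p, Nat.mod_lt _ hp_pos⟩ with hr₀
        have hdec : (monomial a c : MvPolynomial (Fin (n+1)) k) = M ^ p * Xr p n r₀ :=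
          monomial_decomp (p := p) a c
        rw [hdec]
        have : g * (M ^ p * Xr p n r₀) = M ^ p * (g * Xr p n r₀) := by ring
        rw [this, u_pow_mul, claimB, map_mul, ht, map_mul, map_pow]
        rw [hsemi]
    -- Claim C : g ∈ colon
    have claimC : g ∈ Submodule.colon (Ip p n I) I := by
      rw [Submodule.mem_colon]
      intro f hf
      rw [smul_eq_mul]
      rw [frobenius_decomp (p := p) (g * f)]
      refine sum_mem fun r _ => ?_
      have hw : u p n (g * f * Xc p n r) ∈ I := by
        rw [mul_assoc]
        rw [← Ideal.Quotient.eq_zero_iff_mem, claimA, Ideal.Quotient.eq_zero_iff_mem.mpr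
          (Ideal.mul_mem_right _ I hf), hφ0]
      exact Ideal.mul_mem_right _ _
        (Ideal.subset_span ⟨u p n (g * f * Xc p n r), hw, rfl⟩)
    have hgmp : g ∈ mp p n (k := k) := hle claimC
    have hum : u p n g ∈ mm n (k := k) := u_mp_mem hgmp
    have hu1 : Ideal.Quotient.mk I (u p n g) = 1 := by
      have := claimA 1
      rw [mul_one] at this
      rw [this, map_one, hone]
    have hsub : u p n g - 1 ∈ I := by
      rw [← Ideal.Quotient.eq_zero_iff_mem, map_sub, hu1, map_one, sub_self]
    have h1 : constantCoeff (u p n g - 1) = (0 : k) := constantCoeff_of_mem_I hI hhom hsub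
    have h2 : constantCoeff (u p n g) = (0 : k) := constantCoeff_of_mem_mm hum
    rw [map_sub, h2, map_one, zero_sub, neg_eq_zero] at h1
    exact one_ne_zero h1
  · intro hle
    obtain ⟨g0, hg0c, hg0m⟩ := SetLike.not_le_iff_exists.mp hle
    have hcomp : ∃ d, homogeneousComponent d g0 ∉ mp p n (k := k) := by
      by_contra hcon
      push_neg at hcon
      exact hg0m (by
        rw [← sum_homogeneousComponent g0]
        exact sum_mem fun i _ => hcon i)
    obtain ⟨d, hgm⟩ := hcomp
    set g : MvPolynomial (Fin (n+1)) k := homogeneousComponent d g0 with hg_def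
    have hgc : g ∈ Submodule.colon (Ip p n I) I := colon_component hhom hg0c d
    obtain ⟨a, ha, hale⟩ := exists_good_monomial hgm
    set b : Fin (n+1) →₀ ℕ := pm1 p n - a with hb_def
    have hba : b + a = pm1 p n := by
      ext i
      have := hale i
      have hp1 := hp_pos (p := p)
      simp only [hb_def, Finsupp.add_apply, Finsupp.tsub_apply, pm1_apply]
      omega
    have hadeg : a.degree = d := by
      have := (homogeneousComponent_isHomogeneous d g0) (mem_support_iff.mp ha)
      rw [Finsupp.degree_eq_weight_one]
      exact this
    have hg1hom : (monomial b 1 * g).IsHomogeneous ((pm1 p n).degree) := by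
      have h1 : (monomial b (1 : k)).IsHomogeneous b.degree := isHomogeneous_monomial 1 rfl
      have h2 := h1.mul (homogeneousComponent_isHomogeneous d g0)
      have h3 : b.degree + d = (pm1 p n).degree := by
        rw [← hba, ← hadeg, Finsupp.degree_eq_weight_one, map_add]
      rwa [h3] at h2
    have hcoeff : coeff (pm1 p n) (monomial b 1 * g) = coeff a g := by
      rw [← hba, coeff_monomial_mul, one_mul]
    have hug1 : u p n (monomial b 1 * g) = C (pt p (coeff a g)) := by
      rw [u_of_isHomogeneous hg1hom, hcoeff]
    set e : k := pt p (coeff a g) with he_def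
    have he : e ≠ 0 := pt_ne_zero (mem_support_iff.mp ha)
    set g' : MvPolynomial (Fin (n+1)) k := C e⁻¹ ^ p * (monomial b 1 * g) with hg'_def
    have hug' : u p n g' = 1 := by
      rw [hg'_def, u_pow_mul, hug1, ← C_mul, inv_mul_cancel₀ he, C_1]
    have hg'c : g' ∈ Submodule.colon (Ip p n I) I :=
      Ideal.mul_mem_left _ _ (Ideal.mul_mem_left _ _ hgc)
    have hu_mem : ∀ x ∈ I, u p n (g' * x) ∈ I := by
      intro x hx
      have h1 : g' * x ∈ Ip p n I := by
        have := Submodule.mem_colon.mp hg'c x hx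
        rwa [smul_eq_mul] at this
      have := u_mul_mem h1 1
      rwa [one_mul] at this
    set sec : (MvPolynomial (Fin (n+1)) k ⧸ I) → MvPolynomial (Fin (n+1)) k :=
      Function.surjInv hmk with hsec_def
    have hsec : ∀ y, Ideal.Quotient.mk I (sec y) = y := fun y => Function.surjInv_eq hmk y
    have key : ∀ x, Ideal.Quotient.mk I (u p n (g' * sec (Ideal.Quotient.mk I x)))
        = Ideal.Quotient.mk I (u p n (g' * x)) := by
      intro x
      rw [Ideal.Quotient.eq, ← map_sub, ← mul_sub]
      exact hu_mem _ (Ideal.Quotient.eq.mp (hsec (Ideal.Quotient.mk I x)))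
    refine ⟨fun y => Ideal.Quotient.mk I (u p n (g' * sec y)), ?_, ?_, ?_⟩
    · intro x y
      obtain ⟨x, rfl⟩ := hmk x
      obtain ⟨y, rfl⟩ := hmk y
      beta_reduce
      rw [← map_add, key, key, key, mul_add, map_add,
        map_add (Ideal.Quotient.mk I) (u p n (g' * x)) (u p n (g' * y))]
    · intro r x
      obtain ⟨s, rfl⟩ := hmk r
      obtain ⟨x, rfl⟩ := hmk x
      beta_reduce
      rw [← map_pow, ← map_mul, key, key]
      have hrr : g' * (s ^ p * x) = s ^ p * (g' * x) := by ring
      rw [hrr, u_pow_mul, map_mul]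
    · beta_reduce
      have hk := key 1
      rw [map_one] at hk
      rw [hk, mul_one, hug', map_one]
end

section
/- Let p be a prime, k a perfect field of characteristic p, S = k[x₁,…,xₙ], I an ideal of S, R = S/I, and π : S → R the quotient map. Then for every integer e ≥ 1 and every p^{-e}-linear map φ : R → R there exists a p^{-e}-linear map ψ : S → S with ψ(I) ⊆ I and π ∘ ψ = φ ∘ π; conversely, every p^{-e}-linear ψ : S → S with ψ(I) ⊆ I descends to a p^{-e}-linear map on R. -/
open MvPolynomial

section Aux

variable (p : ℕ) [Fact p.Prime] (k : Type*) [Field k] [CharP k p] [PerfectRing k p]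
  (n : ℕ) (e : ℕ)

local notation "S" => MvPolynomial (Fin n) k

noncomputable def peRt : k →+* k := ((iterateFrobeniusEquiv k p e).symm : k ≃+* k)

lemma peRt_pow (c : k) : (peRt p k e c) ^ p ^ e = c := by
  have := (iterateFrobeniusEquiv k p e).apply_symm_apply c
  rwa [iterateFrobeniusEquiv_def] at this

lemma peRt_pow_mul (d c : k) : peRt p k e (d ^ p ^ e * c) = d * peRt p k e c := by
  have h1 : peRt p k e (d ^ p ^ e) = d := by
    have := (iterateFrobeniusEquiv k p e).symm_apply_apply d
    rwa [iterateFrobeniusEquiv_def] at this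
  rw [map_mul, h1]

variable (q : ℕ)

noncomputable def mdiv (m : Fin n →₀ ℕ) : Fin n →₀ ℕ := m.mapRange (· / q) (Nat.zero_div q)
noncomputable def mmod (m : Fin n →₀ ℕ) : Fin n →₀ ℕ := m.mapRange (· % q) (Nat.zero_mod q)

lemma mdiv_mmod (m : Fin n →₀ ℕ) : q • mdiv n q m + mmod n q m = m := by
  ext i
  simp [mdiv, mmod, Finsupp.smul_apply, smul_eq_mul, Nat.div_add_mod]

lemma mdiv_shift (hq : 0 < q) (b m : Fin n →₀ ℕ) :
    mdiv n q (q • b + m) = b + mdiv n q m := by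
  ext i
  simp [mdiv, Finsupp.smul_apply, smul_eq_mul, Nat.mul_add_div hq]

lemma mmod_shift (b m : Fin n →₀ ℕ) : mmod n q (q • b + m) = mmod n q m := by
  ext i
  simp [mmod, Finsupp.smul_apply, smul_eq_mul, Nat.mul_add_mod]

/-- The lifted map, given a choice `t` of values on the basis monomials. -/
noncomputable def peLift (t : (Fin n →₀ ℕ) → S) (s : S) : S :=
  Finsupp.sum (AddMonoidAlgebra.coeff s) fun m c =>
    monomial (mdiv n (p ^ e) m) (peRt p k e c) * t (mmod n (p ^ e) m)

lemma peLift_zero_coeff (t : (Fin n →₀ ℕ) → S) (m : Fin n →₀ ℕ) :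
    monomial (mdiv n (p ^ e) m) (peRt p k e (0 : k)) * t (mmod n (p ^ e) m) = 0 := by
  simp

lemma peLift_add (t : (Fin n →₀ ℕ) → S) (x y : S) :
    peLift p k n e t (x + y) = peLift p k n e t x + peLift p k n e t y := by
  unfold peLift
  rw [AddMonoidAlgebra.coeff_add, Finsupp.sum_add_index' (fun m => peLift_zero_coeff p k n e t m)]
  intro m c d
  rw [map_add, map_add, add_mul]

lemma peLift_monomial (t : (Fin n →₀ ℕ) → S) (m : Fin n →₀ ℕ) (c : k) :
    peLift p k n e t (monomial m c) =
      monomial (mdiv n (p ^ e) m) (peRt p k e c) * t (mmod n (p ^ e) m) := by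
  unfold peLift
  rw [← single_eq_monomial, AddMonoidAlgebra.coeff_single]
  exact Finsupp.sum_single_index (peLift_zero_coeff p k n e t m)

lemma peLift_semilinear (t : (Fin n →₀ ℕ) → S) (r x : S) :
    peLift p k n e t (r ^ p ^ e * x) = r * peLift p k n e t x := by
  have hq : 0 < p ^ e := pow_pos (Fact.out : p.Prime).pos e
  induction r using MvPolynomial.induction_on' with
  | add r r' hr hr' =>
    rw [add_pow_char_pow, add_mul, peLift_add, hr, hr', add_mul]
  | monomial b d =>
    induction x using MvPolynomial.induction_on' with
    | add x y hx hy =>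
      rw [mul_add, peLift_add, hx, hy, peLift_add, mul_add]
    | monomial m c =>
      rw [monomial_pow, monomial_mul, peLift_monomial, peLift_monomial,
        mdiv_shift n _ hq, mmod_shift, peRt_pow_mul, ← monomial_mul, mul_assoc]

end Aux

/-- Lifting `p⁻ᵉ`-linear maps along `S → R = S/I` for `S = k[x₁,…,xₙ]`: every `p⁻ᵉ`-linear
map on `R` lifts to a `p⁻ᵉ`-linear map on `S` compatible with `I`, and conversely every
`p⁻ᵉ`-linear map on `S` compatible with `I` descends to `R`. -/
theorem lift_and_descend_pe_linear (p : ℕ) [Fact p.Prime] (k : Type*) [Field k] [CharP k p]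
    [PerfectRing k p] (n : ℕ) (I : Ideal (MvPolynomial (Fin n) k)) (e : ℕ) (he : 1 ≤ e) :
    (∀ φ : (MvPolynomial (Fin n) k ⧸ I) → (MvPolynomial (Fin n) k ⧸ I),
      (∀ x y, φ (x + y) = φ x + φ y) →
      (∀ r x, φ (r ^ p ^ e * x) = r * φ x) →
      ∃ ψ : MvPolynomial (Fin n) k → MvPolynomial (Fin n) k,
        (∀ x y, ψ (x + y) = ψ x + ψ y) ∧
        (∀ r x, ψ (r ^ p ^ e * x) = r * ψ x) ∧
        (∀ a ∈ I, ψ a ∈ I) ∧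
        (∀ s, Ideal.Quotient.mk I (ψ s) = φ (Ideal.Quotient.mk I s))) ∧
    (∀ ψ : MvPolynomial (Fin n) k → MvPolynomial (Fin n) k,
      (∀ x y, ψ (x + y) = ψ x + ψ y) →
      (∀ r x, ψ (r ^ p ^ e * x) = r * ψ x) →
      (∀ a ∈ I, ψ a ∈ I) →
      ∃ φ : (MvPolynomial (Fin n) k ⧸ I) → (MvPolynomial (Fin n) k ⧸ I),
        (∀ x y, φ (x + y) = φ x + φ y) ∧
        (∀ r x, φ (r ^ p ^ e * x) = r * φ x) ∧
        (∀ s, Ideal.Quotient.mk I (ψ s) = φ (Ideal.Quotient.mk I s))) := by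
  have hq : 0 < p ^ e := pow_pos (Fact.out : p.Prime).pos e
  constructor
  · -- lifting
    intro φ hadd hsemi
    have hφ0 : φ 0 = 0 := by
      have h := hadd 0 0
      rw [add_zero] at h
      exact (left_eq_add.mp h).symm ▸ rfl
    choose t ht using fun a : Fin n →₀ ℕ =>
      Ideal.Quotient.mk_surjective (I := I) (φ (Ideal.Quotient.mk I (monomial a 1)))
    have hkey : ∀ s, Ideal.Quotient.mk I (peLift p k n e t s)
        = φ (Ideal.Quotient.mk I s) := by
      intro s
      have hterm : ∀ m ∈ s.support,
          Ideal.Quotient.mk I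
              (monomial (mdiv n (p ^ e) m) (peRt p k e (coeff m s)) * t (mmod n (p ^ e) m))
            = φ (Ideal.Quotient.mk I (monomial m (coeff m s))) := by
        intro m _
        rw [map_mul, ht, ← hsemi, ← map_pow, ← map_mul, monomial_pow, peRt_pow,
          monomial_mul, mdiv_mmod, mul_one]
      have hstep : Ideal.Quotient.mk I (peLift p k n e t s)
          = ∑ m ∈ s.support, φ (Ideal.Quotient.mk I (monomial m (coeff m s))) := by
        unfold peLift
        rw [Finsupp.sum, map_sum]
        exact Finset.sum_congr rfl hterm
      rw [hstep]
      have hsum : ∀ (F : Finset (Fin n →₀ ℕ)) (f : (Fin n →₀ ℕ) → MvPolynomial (Fin n) k),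
          ∑ m ∈ F, φ (Ideal.Quotient.mk I (f m))
            = φ (Ideal.Quotient.mk I (∑ m ∈ F, f m)) := by
        intro F f
        induction F using Finset.induction_on with
        | empty => simp [hφ0]
        | insert _ _ hx ih =>
          rw [Finset.sum_insert hx, Finset.sum_insert hx, ih, map_add, hadd]
      rw [hsum]
      congr 1
      congr 1
      exact (as_sum s).symm
    exact ⟨peLift p k n e t, peLift_add p k n e t, peLift_semilinear p k n e t,
      fun a ha => by
        rw [← Ideal.Quotient.eq_zero_iff_mem, hkey, Ideal.Quotient.eq_zero_iff_mem.2 ha, hφ0],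
      hkey⟩
  · -- descending
    intro ψ hadd hsemi hI
    have hsub : ∀ a b, ψ (a - b) = ψ a - ψ b := by
      intro a b
      have h := hadd (a - b) b
      rw [sub_add_cancel] at h
      exact eq_sub_of_add_eq h.symm
    choose σ hσ using fun x : MvPolynomial (Fin n) k ⧸ I =>
      Ideal.Quotient.mk_surjective (I := I) x
    have hkey : ∀ s, Ideal.Quotient.mk I (ψ (σ (Ideal.Quotient.mk I s)))
        = Ideal.Quotient.mk I (ψ s) := by
      intro s
      rw [Ideal.Quotient.eq, ← hsub]
      exact hI _ (Ideal.Quotient.eq.mp (hσ (Ideal.Quotient.mk I s)))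
    refine ⟨fun x => Ideal.Quotient.mk I (ψ (σ x)), ?_, ?_, fun s => (hkey s).symm⟩
    · intro x y
      obtain ⟨a, rfl⟩ := Ideal.Quotient.mk_surjective (I := I) x
      obtain ⟨b, rfl⟩ := Ideal.Quotient.mk_surjective (I := I) y
      show Ideal.Quotient.mk I (ψ (σ (Ideal.Quotient.mk I a + Ideal.Quotient.mk I b)))
        = Ideal.Quotient.mk I (ψ (σ (Ideal.Quotient.mk I a)))
          + Ideal.Quotient.mk I (ψ (σ (Ideal.Quotient.mk I b)))
      rw [← map_add, hkey, hkey, hkey, hadd, map_add]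
    · intro r x
      obtain ⟨a, rfl⟩ := Ideal.Quotient.mk_surjective (I := I) x
      obtain ⟨b, rfl⟩ := Ideal.Quotient.mk_surjective (I := I) r
      show Ideal.Quotient.mk I (ψ (σ ((Ideal.Quotient.mk I b) ^ p ^ e * Ideal.Quotient.mk I a)))
        = Ideal.Quotient.mk I b * Ideal.Quotient.mk I (ψ (σ (Ideal.Quotient.mk I a)))
      rw [← map_pow, ← map_mul, hkey, hkey, hsemi, map_mul]
end

section
/- Let p be a prime and R a reduced commutative ring of characteristic p, and let K be the total ring of fractions of R (the localization of R at its set of nonzerodivisors). If R is F-split, then R is weakly normal: for every z ∈ K with z^p lying in the image of R in K, z itself lies in the image of R in K. -/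
/-- An F-split reduced ring of characteristic `p` is weakly normal: any element `z` of the
total ring of fractions with `z^p` in (the image of) `R` lies in (the image of) `R`. -/
theorem fsplit_implies_weaklyNormal (p : ℕ) (hp : p.Prime) (R : Type*) [CommRing R]
    [IsReduced R] [CharP R p]
    (φ : R → R) (hadd : ∀ x y : R, φ (x + y) = φ x + φ y)
    (hlin : ∀ r x : R, φ (r ^ p * x) = r * φ x) (hone : φ 1 = 1) :
    ∀ z : FractionRing R, (∃ r : R, algebraMap R (FractionRing R) r = z ^ p) →
      ∃ r : R, algebraMap R (FractionRing R) r = z := by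
  intro z hz
  obtain ⟨r, hr⟩ := hz
  obtain ⟨⟨a, s⟩, hmk⟩ := IsLocalization.mk'_surjective (nonZeroDivisors R) z
  dsimp only at hmk
  have hs : algebraMap R (FractionRing R) s * z = algebraMap R (FractionRing R) a := by
    rw [← hmk, IsLocalization.mk'_spec']
  have hsp : algebraMap R (FractionRing R) (s ^ p * r) =
      algebraMap R (FractionRing R) (a ^ p) := by
    rw [map_mul, map_pow, hr, ← mul_pow, hs, map_pow]
  have heq : (s : R) ^ p * r = a ^ p := IsFractionRing.injective R (FractionRing R) hsp
  have ha : a = (s : R) * φ r := by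
    have h1 : φ (a ^ p) = a := by
      have := hlin a 1
      rwa [mul_one, hone, mul_one] at this
    rw [← h1, ← heq, hlin]
  refine ⟨φ r, ?_⟩
  have hunit := IsLocalization.map_units (FractionRing R) s
  refine hunit.mul_left_cancel ?_
  rw [hs, ha, map_mul]
end

section
/- Let p be a prime and f : R → S an injective ring homomorphism of commutative rings of characteristic p that splits as a map of R-modules, i.e., there exists an additive map σ : S → R with σ(f(r)·s) = r·σ(s) for all r ∈ R, s ∈ S and σ ∘ f = id_R. If S is F-split, then R is F-split. -/
/-- If `R ⊆ S` is a split inclusion of commutative rings of characteristic `p` and `S` is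
F-split, then `R` is F-split. -/
theorem fsplit_of_split_inclusion (p : ℕ) (hp : p.Prime) (R S : Type*) [CommRing R] [CommRing S]
    [CharP R p] [CharP S p] (f : R →+* S) (hf : Function.Injective f)
    (σ : S → R) (hσadd : ∀ x y : S, σ (x + y) = σ x + σ y)
    (hσlin : ∀ (r : R) (s : S), σ (f r * s) = r * σ s)
    (hσf : ∀ r : R, σ (f r) = r)
    (hS : ∃ φ : S → S, (∀ x y : S, φ (x + y) = φ x + φ y) ∧
      (∀ r x : S, φ (r ^ p * x) = r * φ x) ∧ φ 1 = 1) :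
    ∃ φ : R → R, (∀ x y : R, φ (x + y) = φ x + φ y) ∧
      (∀ r x : R, φ (r ^ p * x) = r * φ x) ∧ φ 1 = 1 := by
  obtain ⟨φ, hadd, hlin, hone⟩ := hS
  refine ⟨fun r => σ (φ (f r)), fun x y => ?_, fun r x => ?_, ?_⟩
  · simp only [map_add, hadd, hσadd]
  · simp only [map_mul, map_pow, hlin, hσlin]
  · simp only [map_one, hone]
    rw [← map_one f, hσf]
end

section
/- Let p be a prime and R a reduced Noetherian commutative ring of characteristic p. Let K be the total ring of fractions of R (the localization of R at its set of nonzerodivisors), let S be the integral closure of R in K, and assume S is a finitely generated R-module. Let 𝔠 = { r ∈ R : r·S ⊆ R } be the conductor ideal. Then for every integer e ≥ 1 and every p^{-e}-linear map φ : R → R one has φ(𝔠) ⊆ 𝔠. -/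
set_option synthInstance.maxHeartbeats 1000000
set_option maxHeartbeats 1000000

/-- Every `p⁻ᵉ`-linear map on a reduced Noetherian ring `R` of characteristic `p` (with
module-finite normalization) is compatible with the conductor ideal of `R` in its
normalization `S` inside the total ring of fractions `K`. -/
theorem conductor_compatible (p : ℕ) (hp : p.Prime) (R : Type*) [CommRing R] [IsReduced R]
    [IsNoetherianRing R] [CharP R p]
    (hfin : Module.Finite R (integralClosure R (FractionRing R)))
    (e : ℕ) (he : 1 ≤ e) (φ : R → R)
    (hadd : ∀ x y : R, φ (x + y) = φ x + φ y)
    (hlin : ∀ r x : R, φ (r ^ p ^ e * x) = r * φ x) :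
    ∀ r : R,
      (∀ s ∈ integralClosure R (FractionRing R),
        algebraMap R (FractionRing R) r * s ∈ Set.range (algebraMap R (FractionRing R))) →
      (∀ s ∈ integralClosure R (FractionRing R),
        algebraMap R (FractionRing R) (φ r) * s ∈ Set.range (algebraMap R (FractionRing R))) := by
  intro r hr s hs
  set q := p ^ e with hq
  -- s ^ q is in the integral closure
  have hsq : s ^ q ∈ integralClosure R (FractionRing R) := pow_mem hs q
  obtain ⟨a, ha⟩ := hr (s ^ q) hsq
  -- write s = x / y with y a nonzerodivisor
  obtain ⟨⟨x, y⟩, hxy⟩ := IsLocalization.surj (nonZeroDivisors R) s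
  dsimp only at hxy
  have hyunit : IsUnit (algebraMap R (FractionRing R) (y : R)) :=
    IsLocalization.map_units (FractionRing R) y
  have hinj : Function.Injective (algebraMap R (FractionRing R)) := IsFractionRing.injective R (FractionRing R)
  -- a * y^q = r * x^q in R
  have key : a * (y : R) ^ q = r * x ^ q := by
    apply hinj
    rw [map_mul, map_mul, map_pow, map_pow, ha, ← hxy]
    ring
  -- apply p⁻ᵉ-linearity
  have key2 : (y : R) * φ a = x * φ r := by
    rw [← hlin y a, ← hlin x r]
    congr 1
    rw [mul_comm ((y:R)^q) a, mul_comm (x^q) r, key]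
  refine ⟨φ a, ?_⟩
  have := hyunit
  apply this.mul_left_cancel
  calc algebraMap R (FractionRing R) (y : R) * algebraMap R (FractionRing R) (φ a)
      = algebraMap R (FractionRing R) ((y : R) * φ a) := (map_mul _ _ _).symm
    _ = algebraMap R (FractionRing R) (x * φ r) := by rw [key2]
    _ = algebraMap R (FractionRing R) (y : R) * (algebraMap R (FractionRing R) (φ r) * s) := by
        rw [map_mul, ← hxy]; ring
end

section
/- Let p be a prime and R a reduced Noetherian commutative ring of characteristic p. Let K be the total ring of fractions of R (the localization of R at its set of nonzerodivisors), let S be the integral closure of R in K, and assume S is a finitely generated R-module. Then for every integer e ≥ 1, every p^{-e}-linear map φ : R → R extends to the normalization: there exists a p^{-e}-linear map ψ : S → S with ψ(r) = φ(r) for all r ∈ R (identifying R with its image in S). -/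
set_option synthInstance.maxHeartbeats 1000000
set_option maxHeartbeats 1000000

open Polynomial

namespace PeLinearAux

open scoped nonZeroDivisors

variable {R : Type*} [CommRing R]

/-- A chosen fraction representation of an element of the fraction ring. -/
noncomputable def rep (x : FractionRing R) : R × (nonZeroDivisors R) :=
  Classical.choose (IsLocalization.surj (M := nonZeroDivisors R) x)

theorem rep_spec (x : FractionRing R) :
    x * algebraMap R (FractionRing R) ((rep x).2 : R) = algebraMap R (FractionRing R) (rep x).1 :=
  Classical.choose_spec (IsLocalization.surj (M := nonZeroDivisors R) x)

/-- The extension of a `p^{-e}`-linear map `φ : R → R` to the total fraction ring. -/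
noncomputable def phiK (q : ℕ) (φ : R → R) (x : FractionRing R) : FractionRing R :=
  algebraMap R (FractionRing R) (φ ((rep x).1 * ((rep x).2 : R) ^ (q - 1))) *
    ↑(IsLocalization.map_units (FractionRing R) (rep x).2).unit⁻¹

/-- Master lemma: `phiK` is computed correctly by any fraction representation. -/
theorem phiK_spec (q : ℕ) (hq : 1 ≤ q) (φ : R → R)
    (hlin : ∀ r x : R, φ (r ^ q * x) = r * φ x)
    (x : FractionRing R) (a : R) (s : nonZeroDivisors R)
    (h : x * algebraMap R (FractionRing R) (s : R) = algebraMap R (FractionRing R) a) :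
    phiK q φ x * algebraMap R (FractionRing R) (s : R)
      = algebraMap R (FractionRing R) (φ (a * (s : R) ^ (q - 1))) := by
  obtain ⟨m, rfl⟩ : ∃ m, q = m + 1 := ⟨q - 1, (Nat.succ_pred_eq_of_pos hq).symm⟩
  simp only [Nat.add_sub_cancel] at *
  set F := algebraMap R (FractionRing R) with hF
  set a₀ := (rep x).1
  set s₀ := (rep x).2
  have h₀ : x * F (s₀ : R) = F a₀ := rep_spec x
  have hinj : Function.Injective F := IsFractionRing.injective R (FractionRing R)
  have key : a₀ * (s : R) = a * (s₀ : R) := by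
    apply hinj
    rw [map_mul, map_mul, ← h₀, ← h]
    ring
  have hR : (s : R) * φ (a₀ * (s₀ : R) ^ m) = (s₀ : R) * φ (a * (s : R) ^ m) := by
    rw [← hlin (s : R) (a₀ * (s₀ : R) ^ m), ← hlin (s₀ : R) (a * (s : R) ^ m)]
    congr 1
    linear_combination ((s:R) ^ m * (s₀:R) ^ m) * key
  set u := (IsLocalization.map_units (FractionRing R) s₀).unit with hu
  have huv : (u : FractionRing R) = F (s₀ : R) := rfl
  show F (φ (a₀ * (s₀ : R) ^ m)) * ↑u⁻¹ * F (s : R) = F (φ (a * (s : R) ^ m))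
  have hAB : F (φ (a₀ * (s₀ : R) ^ m)) * F (s : R)
      = F (φ (a * (s : R) ^ m)) * (u : FractionRing R) := by
    rw [huv, ← map_mul, ← map_mul]
    exact congrArg F (by linear_combination hR)
  calc F (φ (a₀ * (s₀ : R) ^ m)) * ↑u⁻¹ * F (s : R)
      = F (φ (a₀ * (s₀ : R) ^ m)) * F (s : R) * ↑u⁻¹ := by ring
    _ = F (φ (a * (s : R) ^ m)) * ↑u * ↑u⁻¹ := by rw [hAB]
    _ = F (φ (a * (s : R) ^ m)) := Units.mul_inv_cancel_right _ _

theorem phiK_semilinear (q : ℕ) (hq : 1 ≤ q) (φ : R → R)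
    (hlin : ∀ r x : R, φ (r ^ q * x) = r * φ x) (k x : FractionRing R) :
    phiK q φ (k ^ q * x) = k * phiK q φ x := by
  obtain ⟨m, rfl⟩ : ∃ m, q = m + 1 := ⟨q - 1, (Nat.succ_pred_eq_of_pos hq).symm⟩
  set F := algebraMap R (FractionRing R) with hF
  obtain ⟨⟨a, s⟩, hx⟩ := IsLocalization.surj (M := nonZeroDivisors R) x
  obtain ⟨⟨b, t⟩, hk⟩ := IsLocalization.surj (M := nonZeroDivisors R) k
  simp only at hx hk
  have hts : ((t : R) ^ (m + 1) * (s : R)) ∈ nonZeroDivisors R :=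
    mul_mem (pow_mem t.2 _) s.2
  have h1 : (k ^ (m + 1) * x) * F ((t : R) ^ (m + 1) * (s : R)) = F (b ^ (m + 1) * a) := by
    rw [map_mul, map_pow, map_mul, map_pow]
    calc k ^ (m+1) * x * (F (t:R) ^ (m+1) * F (s:R))
        = (k * F (t:R)) ^ (m+1) * (x * F (s:R)) := by ring
      _ = F b ^ (m+1) * F a := by rw [hk, hx]
  have P1 := phiK_spec (m+1) hq φ hlin _ _ ⟨_, hts⟩ h1
  have P2 := phiK_spec (m+1) hq φ hlin x a s hx
  simp only [Nat.add_sub_cancel] at P1 P2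
  have hU : IsUnit (F ((t : R) ^ (m + 1) * (s : R))) :=
    IsLocalization.map_units (FractionRing R) ⟨_, hts⟩
  apply hU.mul_right_cancel
  rw [P1]
  have harg : b ^ (m+1) * a * ((t:R) ^ (m+1) * (s:R)) ^ m
      = (b * (t:R) ^ m) ^ (m+1) * (a * (s:R) ^ m) := by ring
  rw [harg, hlin]
  calc F (b * (t:R)^m * φ (a * (s:R)^m))
      = F b * F (t:R) ^ m * (F (φ (a * (s:R)^m))) := by
        rw [map_mul, map_mul, map_pow]
    _ = F b * F (t:R) ^ m * (phiK (m+1) φ x * F (s:R)) := by rw [P2]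
    _ = (k * F (t:R)) * F (t:R) ^ m * (phiK (m+1) φ x * F (s:R)) := by rw [hk]
    _ = k * phiK (m+1) φ x * F ((t:R) ^ (m+1) * (s:R)) := by
        rw [map_mul, map_pow]; ring

theorem phiK_add (q : ℕ) (hq : 1 ≤ q) (φ : R → R)
    (hadd : ∀ x y : R, φ (x + y) = φ x + φ y)
    (hlin : ∀ r x : R, φ (r ^ q * x) = r * φ x) (x y : FractionRing R) :
    phiK q φ (x + y) = phiK q φ x + phiK q φ y := by
  obtain ⟨m, rfl⟩ : ∃ m, q = m + 1 := ⟨q - 1, (Nat.succ_pred_eq_of_pos hq).symm⟩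
  set F := algebraMap R (FractionRing R) with hF
  obtain ⟨⟨a, s⟩, hx⟩ := IsLocalization.surj (M := nonZeroDivisors R) x
  obtain ⟨⟨b, t⟩, hy⟩ := IsLocalization.surj (M := nonZeroDivisors R) y
  simp only at hx hy
  have hst : ((s : R) * (t : R)) ∈ nonZeroDivisors R := mul_mem s.2 t.2
  have h1 : (x + y) * F ((s : R) * (t : R)) = F (a * (t:R) + b * (s:R)) := by
    rw [map_mul, map_add, map_mul, map_mul]
    calc (x + y) * (F (s:R) * F (t:R))
        = (x * F (s:R)) * F (t:R) + (y * F (t:R)) * F (s:R) := by ring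
      _ = F a * F (t:R) + F b * F (s:R) := by rw [hx, hy]
  have P1 := phiK_spec (m+1) hq φ hlin _ _ ⟨_, hst⟩ h1
  have P2 := phiK_spec (m+1) hq φ hlin x a s hx
  have P3 := phiK_spec (m+1) hq φ hlin y b t hy
  simp only [Nat.add_sub_cancel] at P1 P2 P3
  have hU : IsUnit (F ((s : R) * (t : R))) :=
    IsLocalization.map_units (FractionRing R) ⟨_, hst⟩
  apply hU.mul_right_cancel
  rw [P1]
  have harg : (a * (t:R) + b * (s:R)) * ((s:R) * (t:R)) ^ m
      = (t:R) ^ (m+1) * (a * (s:R) ^ m) + (s:R) ^ (m+1) * (b * (t:R) ^ m) := by ring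
  rw [harg, hadd, hlin, hlin]
  calc F ((t:R) * φ (a * (s:R)^m) + (s:R) * φ (b * (t:R)^m))
      = F (t:R) * (phiK (m+1) φ x * F (s:R)) + F (s:R) * (phiK (m+1) φ y * F (t:R)) := by
        rw [map_add, map_mul, map_mul, P2, P3]
    _ = (phiK (m+1) φ x + phiK (m+1) φ y) * F ((s:R) * (t:R)) := by
        rw [map_mul]; ring

theorem phiK_algebraMap (q : ℕ) (hq : 1 ≤ q) (φ : R → R)
    (hlin : ∀ r x : R, φ (r ^ q * x) = r * φ x) (r : R) :
    phiK q φ (algebraMap R (FractionRing R) r) = algebraMap R (FractionRing R) (φ r) := by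
  have h : algebraMap R (FractionRing R) r
        * algebraMap R (FractionRing R) ((1 : nonZeroDivisors R) : R)
      = algebraMap R (FractionRing R) r := by
    simp
  have := phiK_spec q hq φ hlin _ r 1 h
  simpa using this

/-- The conductor-like ideal: elements multiplying the integral closure into `R`. -/
def cond (R : Type*) [CommRing R] : Ideal R where
  carrier := {r | ∀ t : integralClosure R (FractionRing R),
    ∃ u : R, algebraMap R (FractionRing R) r * (t : FractionRing R)
      = algebraMap R (FractionRing R) u}
  add_mem' := by
    intro x y hx hy t
    obtain ⟨u, hu⟩ := hx t
    obtain ⟨v, hv⟩ := hy t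
    exact ⟨u + v, by rw [map_add, map_add, add_mul, hu, hv]⟩
  zero_mem' := by intro t; exact ⟨0, by simp⟩
  smul_mem' := by
    intro c x hx t
    obtain ⟨u, hu⟩ := hx t
    exact ⟨c * u, by rw [smul_eq_mul, map_mul, map_mul, mul_assoc, hu]⟩

theorem exists_nzd_cond (hfin : Module.Finite R (integralClosure R (FractionRing R))) :
    ∃ c : nonZeroDivisors R, (c : R) ∈ cond R := by
  obtain ⟨T, hT⟩ := hfin.fg_top
  obtain ⟨b, hb⟩ := IsLocalization.exist_integer_multiples (nonZeroDivisors R)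
    T (fun t => (t : FractionRing R))
  refine ⟨b, ?_⟩
  intro t
  have htop : t ∈ (⊤ : Submodule R (integralClosure R (FractionRing R))) := trivial
  rw [← hT] at htop
  refine Submodule.span_induction ?_ ?_ ?_ ?_ htop
  · intro s hs
    obtain ⟨u, hu⟩ := hb s hs
    exact ⟨u, by rw [hu, Algebra.smul_def]⟩
  · exact ⟨0, by simp⟩
  · intro s s' _ _ hs hs'
    obtain ⟨u, hu⟩ := hs
    obtain ⟨v, hv⟩ := hs'
    refine ⟨u + v, ?_⟩
    have hcoe : ((s + s' : integralClosure R (FractionRing R)) : FractionRing R)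
        = (s : FractionRing R) + (s' : FractionRing R) := rfl
    rw [hcoe, mul_add, hu, hv, map_add]
  · intro r s _ hs
    obtain ⟨u, hu⟩ := hs
    refine ⟨r * u, ?_⟩
    have : ((r • s : integralClosure R (FractionRing R)) : FractionRing R)
        = algebraMap R (FractionRing R) r * (s : FractionRing R) := by
      rw [Subalgebra.coe_smul, Algebra.smul_def]
    rw [this, map_mul]
    calc algebraMap R (FractionRing R) (b:R)
          * (algebraMap R (FractionRing R) r * (s:FractionRing R))
        = algebraMap R (FractionRing R) r
          * (algebraMap R (FractionRing R) (b:R) * (s:FractionRing R)) := by ring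
      _ = _ := by rw [hu]

/-- Key step: multiplication by `phiK φ s` (for `s` integral) preserves the conductor. -/
theorem cond_stable (q : ℕ) (hq : 1 ≤ q) (φ : R → R)
    (hlin : ∀ r x : R, φ (r ^ q * x) = r * φ x)
    (s : integralClosure R (FractionRing R)) {r : R} (hr : r ∈ cond R) :
    ∃ r' ∈ cond R, phiK q φ (s : FractionRing R) * algebraMap R (FractionRing R) r
      = algebraMap R (FractionRing R) r' := by
  obtain ⟨m, rfl⟩ : ∃ m, q = m + 1 := ⟨q - 1, (Nat.succ_pred_eq_of_pos hq).symm⟩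
  set F := algebraMap R (FractionRing R) with hF
  set z := phiK (m+1) φ (s : FractionRing R) with hz
  have sub : ∀ t : integralClosure R (FractionRing R),
      ∃ w : R, z * (F r * (t : FractionRing R)) = F w := by
    intro t
    obtain ⟨u, hu⟩ := hr t
    obtain ⟨v, hv⟩ := hr (t * s)
    refine ⟨φ (u ^ m * v), ?_⟩
    have h1 : z * (F r * (t : FractionRing R)) = F u * z := by rw [hu]; ring
    rw [h1, ← phiK_semilinear (m+1) hq φ hlin (F u) (s : FractionRing R)]
    have hus : F u * (s : FractionRing R) = F v := by
      rw [← hu, mul_assoc, ← Subalgebra.coe_mul, hv]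
    have h2 : F u ^ (m+1) * (s : FractionRing R) = F (u ^ m * v) := by
      rw [pow_succ, mul_assoc, hus, ← map_pow, ← map_mul]
    rw [h2, phiK_algebraMap (m+1) hq φ hlin]
  obtain ⟨w₀, hw₀⟩ := sub 1
  have hw₀' : z * F r = F w₀ := by
    simpa using hw₀
  refine ⟨w₀, ?_, hw₀'⟩
  intro t
  obtain ⟨w, hw⟩ := sub t
  exact ⟨w, by rw [← hw₀', mul_assoc]; exact hw⟩

/-- `phiK` carries integral elements to integral elements. -/
theorem phiK_isIntegral [IsNoetherianRing R] (q : ℕ) (hq : 1 ≤ q) (φ : R → R)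
    (hlin : ∀ r x : R, φ (r ^ q * x) = r * φ x)
    (hfin : Module.Finite R (integralClosure R (FractionRing R)))
    (s : integralClosure R (FractionRing R)) :
    IsIntegral R (phiK q φ (s : FractionRing R)) := by
  set F := algebraMap R (FractionRing R) with hF
  set z := phiK q φ (s : FractionRing R) with hz
  obtain ⟨c, hc⟩ := exists_nzd_cond hfin
  set N : Submodule R (FractionRing R) :=
    Submodule.map (Algebra.linearMap R (FractionRing R)) (cond R) with hN
  have hNfg : N.FG := (IsNoetherian.noetherian (cond R)).map _
  haveI hNfin : Module.Finite R N := Module.Finite.iff_fg.mpr hNfg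
  have hstab : ∀ x ∈ N, z * x ∈ N := by
    intro x hx
    obtain ⟨r, hr, rfl⟩ := hx
    obtain ⟨r', hr', heq⟩ := cond_stable q hq φ hlin s hr
    exact ⟨r', hr', heq.symm⟩
  set E : N →ₗ[R] N :=
    { toFun := fun n => ⟨z * (n : FractionRing R), hstab _ n.2⟩
      map_add' := by intro a b; apply Subtype.ext; push_cast; ring
      map_smul' := by
        intro r a; apply Subtype.ext
        simp [Algebra.smul_def]
        ring } with hE
  have hEint : IsIntegral R (E : Module.End R N) := Algebra.IsIntegral.isIntegral E
  obtain ⟨f, hfm, hfe⟩ := hEint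
  have key : ∀ g : R[X], ∀ n : N,
      ((eval₂ (algebraMap R (Module.End R N)) E g) n : FractionRing R)
        = eval₂ F z g * (n : FractionRing R) := by
    intro g
    induction g using Polynomial.induction_on with
    | C r =>
        intro n
        rw [eval₂_C, eval₂_C]
        rw [Module.algebraMap_end_apply]
        push_cast
        rw [Algebra.smul_def]
    | add p1 p2 h1 h2 =>
        intro n
        rw [eval₂_add, eval₂_add, LinearMap.add_apply]
        push_cast
        rw [h1 n, h2 n, add_mul]
    | monomial k a ih =>
        intro n
        have e1 : (C a * X ^ (k + 1)) = (C a * X ^ k) * X := by ring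
        have h1 : eval₂ (algebraMap R (Module.End R N)) E ((C a * X ^ k) * X)
            = eval₂ (algebraMap R (Module.End R N)) E (C a * X ^ k) * E :=
          eval₂_mul_X _ _
        have h3 : eval₂ F z ((C a * X ^ k) * X) = eval₂ F z (C a * X ^ k) * z :=
          eval₂_mul_X _ _
        rw [e1, h1, h3, Module.End.mul_apply, ih (E n),
          show ((E n : N) : FractionRing R) = z * (n : FractionRing R) from rfl]
        ring
  have hcN : F (c : R) ∈ N := ⟨(c : R), hc, rfl⟩
  have hzero : eval₂ F z f * F (c : R) = 0 := by
    have := key f ⟨F (c : R), hcN⟩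
    rw [hfe] at this
    simpa using this.symm
  have hu : IsUnit (F (c : R)) := IsLocalization.map_units (FractionRing R) c
  refine ⟨f, hfm, ?_⟩
  exact hu.mul_right_cancel (by rw [hzero, zero_mul])

end PeLinearAux

/-- Every `p⁻ᵉ`-linear map on a reduced Noetherian ring `R` of characteristic `p` (with
module-finite normalization) extends to a `p⁻ᵉ`-linear map on the normalization `S` of `R`
in its total ring of fractions. -/
theorem pe_linear_extends_to_normalization (p : ℕ) (hp : p.Prime) (R : Type*) [CommRing R]
    [IsReduced R] [IsNoetherianRing R] [CharP R p]
    (hfin : Module.Finite R (integralClosure R (FractionRing R)))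
    (e : ℕ) (he : 1 ≤ e) (φ : R → R)
    (hadd : ∀ x y : R, φ (x + y) = φ x + φ y)
    (hlin : ∀ r x : R, φ (r ^ p ^ e * x) = r * φ x) :
    ∃ ψ : integralClosure R (FractionRing R) → integralClosure R (FractionRing R),
      (∀ x y, ψ (x + y) = ψ x + ψ y) ∧
      (∀ s x : integralClosure R (FractionRing R), ψ (s ^ p ^ e * x) = s * ψ x) ∧
      (∀ r : R, ψ (algebraMap R (integralClosure R (FractionRing R)) r) =
        algebraMap R (integralClosure R (FractionRing R)) (φ r)) := by
  have hq1 : 1 ≤ p ^ e := Nat.one_le_pow _ _ hp.pos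
  refine ⟨fun x => ⟨PeLinearAux.phiK (p ^ e) φ (x : FractionRing R),
      (mem_integralClosure_iff R _).mpr
        (PeLinearAux.phiK_isIntegral (p ^ e) hq1 φ hlin hfin x)⟩, ?_, ?_, ?_⟩
  · intro x y
    apply Subtype.ext
    show PeLinearAux.phiK (p ^ e) φ ((x : FractionRing R) + (y : FractionRing R))
      = PeLinearAux.phiK (p ^ e) φ (x : FractionRing R)
        + PeLinearAux.phiK (p ^ e) φ (y : FractionRing R)
    exact PeLinearAux.phiK_add (p ^ e) hq1 φ hadd hlin _ _
  · intro s x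
    apply Subtype.ext
    show PeLinearAux.phiK (p ^ e) φ ((s : FractionRing R) ^ p ^ e * (x : FractionRing R))
      = (s : FractionRing R) * PeLinearAux.phiK (p ^ e) φ (x : FractionRing R)
    exact PeLinearAux.phiK_semilinear (p ^ e) hq1 φ hlin _ _
  · intro r
    apply Subtype.ext
    show PeLinearAux.phiK (p ^ e) φ (algebraMap R (FractionRing R) r)
      = algebraMap R (FractionRing R) (φ r)
    exact PeLinearAux.phiK_algebraMap (p ^ e) hq1 φ hlin r
end

section
/- Let p be a prime, k a field of characteristic p, and f = y² − x³ ∈ k[x,y]. For each integer e ≥ 1 set ν_e = max{ r ∈ ℕ : f^r ∉ (x^{p^e}, y^{p^e}) }. Then the limit of ν_e / p^e as e → ∞ exists and equals: 1/2 if p = 2; 2/3 if p = 3; 5/6 if p ≡ 1 (mod 6); and 5/6 − 1/(6p) if p ≡ 5 (mod 6). -/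
open MvPolynomial Filter

namespace FptAux

open Nat Finset

variable {p : ℕ}

theorem nd_base (hp : p.Prime) {a j : ℕ} (ha : a < p) (hj : j ≤ a) : ¬ p ∣ a.choose j := by
  intro h
  have h1 : p ∣ a ! := (h.mul_right (j ! * (a-j)!)).trans
    (by rw [← Nat.mul_assoc, Nat.choose_mul_factorial_mul_factorial hj])
  exact absurd ((Nat.Prime.dvd_factorial hp).mp h1) (by omega)

theorem lucas_dvd_iff (hp : Fact p.Prime) (n k : ℕ) :
    p ∣ n.choose k ↔ p ∣ (n % p).choose (k % p) * (n / p).choose (k / p) := by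
  have h := @Choose.choose_modEq_choose_mod_mul_choose_div_nat n k p hp
  constructor
  · intro hd; exact (Nat.modEq_zero_iff_dvd).mp ((h.symm.trans (Nat.modEq_zero_iff_dvd.mpr hd)))
  · intro hd; exact (Nat.modEq_zero_iff_dvd).mp ((h.trans (Nat.modEq_zero_iff_dvd.mpr hd)))

theorem lemA (hp : Fact p.Prime) : ∀ (E a j s : ℕ), a < p → j ≤ a → s < p ^ E →
    ¬ p ∣ (a * p ^ E + (p ^ E - 1)).choose (j * p ^ E + s) := by
  intro E
  induction E with
  | zero =>
    intro a j s ha hj hs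
    have : s = 0 := by simpa using hs
    subst this
    simpa using nd_base hp.out ha hj
  | succ E ih =>
    intro a j s ha hj hs
    have hp1 : 1 < p := hp.out.one_lt
    have hpE : 1 ≤ p ^ E := Nat.one_le_pow _ _ (by omega)
    have hpE1 : 1 ≤ p ^ (E+1) := Nat.one_le_pow _ _ (by omega)
    rw [lucas_dvd_iff hp]
    have hn : a * p ^ (E+1) + (p ^ (E+1) - 1) = (a * p ^ E + (p ^ E - 1)) * p + (p - 1) := by
      zify [hpE, hpE1, show 1 ≤ p by omega]
      push_cast [pow_succ]
      ring
    have hk : j * p ^ (E+1) + s = (j * p ^ E) * p + s := by rw [pow_succ]; ring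
    rw [hn, hk, Nat.mul_add_mod', Nat.mul_add_mod', Nat.mod_eq_of_lt (by omega),
      Nat.mul_comm (a * p ^ E + (p ^ E - 1)) p, Nat.mul_comm (j * p ^ E) p,
      Nat.mul_add_div (show 0 < p by omega), Nat.mul_add_div (show 0 < p by omega),
      Nat.div_eq_of_lt (by omega)]
    intro hd
    rcases (Nat.Prime.dvd_mul hp.out).mp hd with h | h
    · exact nd_base hp.out (by omega) (by
        have := Nat.mod_lt s (show 0 < p by omega); omega) h
    · simp only [Nat.add_zero] at h
      exact ih a j (s / p) ha hj
        ((Nat.div_lt_iff_lt_mul (show 0 < p by omega)).mpr (by rw [← pow_succ]; exact hs)) h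

/-- repunit in base p: `rep p E = 1 + p + ... + p^(E-1)` -/
def rep (p : ℕ) : ℕ → ℕ
  | 0 => 0
  | E + 1 => p * rep p E + 1

theorem rep_mul (p : ℕ) (hp : 1 ≤ p) : ∀ E, (p - 1) * rep p E + 1 = p ^ E := by
  intro E
  induction E with
  | zero => simp [rep]
  | succ E ih =>
    have hE : 1 ≤ p ^ E := Nat.one_le_pow _ _ (by omega)
    rw [rep, pow_succ]
    zify [hp] at ih ⊢
    nlinarith [ih]

theorem lemB (hp : Fact p.Prime) : ∀ (E c d : ℕ), c < p → d ≤ c →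
    ¬ p ∣ (c * rep p E).choose (d * rep p E) := by
  intro E
  induction E with
  | zero => intro c d hc hd; simp [rep, hp.out.one_lt.ne']
  | succ E ih =>
    intro c d hc hd
    have hp1 : 1 < p := hp.out.one_lt
    rw [lucas_dvd_iff hp]
    have hn : c * rep p (E+1) = (c * rep p E) * p + c := by rw [rep]; ring
    have hk : d * rep p (E+1) = (d * rep p E) * p + d := by rw [rep]; ring
    rw [hn, hk, Nat.mul_add_mod', Nat.mul_add_mod', Nat.mod_eq_of_lt hc,
      Nat.mod_eq_of_lt (by omega), Nat.mul_comm (c * rep p E) p, Nat.mul_comm (d * rep p E) p,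
      Nat.mul_add_div (show 0 < p by omega), Nat.mul_add_div (show 0 < p by omega),
      Nat.div_eq_of_lt hc, Nat.div_eq_of_lt (by omega), Nat.add_zero, Nat.add_zero]
    intro hd'
    rcases (Nat.Prime.dvd_mul hp.out).mp hd' with h | h
    · exact nd_base hp.out hc hd h
    · exact ih c d hc hd h

theorem lemC (hp : Fact p.Prime) : ∀ (E b i : ℕ), ¬ p ∣ (b * p ^ E).choose i → p ^ E ∣ i := by
  intro E
  induction E with
  | zero => intro b i _; simp
  | succ E ih =>
    intro b i h
    have hp1 : 1 < p := hp.out.one_lt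
    rw [lucas_dvd_iff hp] at h
    have hn : b * p ^ (E+1) = (b * p ^ E) * p + 0 := by rw [pow_succ]; ring
    rw [hn, Nat.mul_add_mod', Nat.mul_comm (b * p ^ E) p,
      Nat.mul_add_div (show 0 < p by omega)] at h
    simp only [Nat.zero_mod, Nat.zero_div, Nat.add_zero] at h
    have him : i % p = 0 := by
      by_contra hne
      exact h (Dvd.dvd.mul_right (by
        rw [Nat.choose_eq_zero_of_lt (by omega)]
        exact dvd_zero p) _)
    have h2 : ¬ p ∣ (b * p ^ E).choose (i / p) := fun hd => h (Dvd.dvd.mul_left hd _)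
    have h3 : p ^ E ∣ i / p := ih b (i / p) h2
    have : i = p * (i / p) := (Nat.mul_div_cancel' (Nat.dvd_of_mod_eq_zero him)).symm
    rw [this, pow_succ, Nat.mul_comm (p^E) p]
    exact Nat.mul_dvd_mul_left p h3

theorem upper_gen (hp : Fact p.Prime) (E b : ℕ)
    (hb : ∀ j, j ≤ b → 2 * j < p → 3 * (b - j) < p → False) :
    ¬ ∃ m, m ≤ b * p ^ E ∧ ¬ p ∣ (b * p ^ E).choose m ∧
      3 * (b * p ^ E - m) < p ^ (E + 1) ∧ 2 * m < p ^ (E + 1) := by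
  rintro ⟨m, hm, hnd, h3, h2⟩
  have hP : 0 < p ^ E := pow_pos hp.out.pos _
  obtain ⟨j, hj⟩ : p ^ E ∣ m := lemC hp E b m hnd
  rw [Nat.mul_comm] at hj
  subst hj
  have hjb : j ≤ b := Nat.le_of_mul_le_mul_right hm hP
  have hq : p ^ (E + 1) = p * p ^ E := by rw [pow_succ]; ring
  apply hb j hjb
  · have : (2 * j) * p ^ E < p * p ^ E := by
      rw [← hq]
      calc (2 * j) * p ^ E = 2 * (j * p ^ E) := by ring
        _ < p ^ (E+1) := h2
    exact (Nat.mul_lt_mul_right hP).mp this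
  · have : (3 * (b - j)) * p ^ E < p * p ^ E := by
      rw [← hq]
      calc (3 * (b - j)) * p ^ E = 3 * ((b - j) * p ^ E) := by ring
        _ = 3 * (b * p ^ E - j * p ^ E) := by rw [Nat.sub_mul]
        _ < p ^ (E+1) := h3
    exact (Nat.mul_lt_mul_right hP).mp this

variable {k : Type*} [Field k]

theorem term_eq (r m : ℕ) :
    (-1 : MvPolynomial (Fin 2) k) ^ (m + r) * (X 1 ^ 2) ^ m * (X 0 ^ 3) ^ (r - m) *
      (r.choose m : MvPolynomial (Fin 2) k) =
    monomial (Finsupp.single 0 (3 * (r - m)) + Finsupp.single 1 (2 * m))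
      ((-1 : k) ^ (m + r) * (r.choose m : k)) := by
  have h1 : ((-1 : MvPolynomial (Fin 2) k) ^ (m + r)) = C ((-1 : k) ^ (m + r)) := by
    simp
  have h2 : ((r.choose m : ℕ) : MvPolynomial (Fin 2) k) = C ((r.choose m : k)) := by
    simp
  rw [h1, h2, ← pow_mul, ← pow_mul, X_pow_eq_monomial, X_pow_eq_monomial,
    C_mul_monomial, monomial_mul, mul_comm _ (C ((r.choose m : k))), C_mul_monomial,
    add_comm (Finsupp.single 1 (2 * m))]
  congr 1
  ring

theorem f_pow_eq (r : ℕ) :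
    ((X 1 : MvPolynomial (Fin 2) k) ^ 2 - X 0 ^ 3) ^ r =
      ∑ m ∈ Finset.range (r + 1),
        monomial (Finsupp.single 0 (3 * (r - m)) + Finsupp.single 1 (2 * m))
          ((-1 : k) ^ (m + r) * (r.choose m : k)) := by
  rw [sub_pow]
  exact Finset.sum_congr rfl fun m _ => term_eq r m

theorem D_apply0 (a b : ℕ) :
    ((Finsupp.single (0 : Fin 2) a + Finsupp.single 1 b) : Fin 2 →₀ ℕ) 0 = a := by
  simp [Finsupp.single_apply]

theorem D_apply1 (a b : ℕ) :
    ((Finsupp.single (0 : Fin 2) a + Finsupp.single 1 b) : Fin 2 →₀ ℕ) 1 = b := by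
  simp [Finsupp.single_apply]

theorem coeff_f_pow (r m₀ : ℕ) (hm₀ : m₀ ≤ r) :
    coeff (Finsupp.single 0 (3 * (r - m₀)) + Finsupp.single 1 (2 * m₀))
      (((X 1 : MvPolynomial (Fin 2) k) ^ 2 - X 0 ^ 3) ^ r) =
      (-1 : k) ^ (m₀ + r) * (r.choose m₀ : k) := by
  rw [f_pow_eq, coeff_sum]
  rw [Finset.sum_eq_single m₀]
  · rw [coeff_monomial, if_pos rfl]
  · intro b _ hb
    rw [coeff_monomial, if_neg]
    intro h
    apply hb
    have := congrArg (fun g : Fin 2 →₀ ℕ => g 1) h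
    simp only [D_apply1] at this
    omega
  · intro h
    exact absurd (Finset.mem_range.mpr (by omega)) h

theorem key_mem (q r : ℕ) :
    ((X 1 : MvPolynomial (Fin 2) k) ^ 2 - X 0 ^ 3) ^ r ∈
        Ideal.span {(X 0 : MvPolynomial (Fin 2) k) ^ q, X 1 ^ q} ↔
      ∀ m ≤ r, ((r.choose m : k) ≠ 0) → q ≤ 3 * (r - m) ∨ q ≤ 2 * m := by
  have hgen : ({(X 0 : MvPolynomial (Fin 2) k) ^ q, X 1 ^ q} : Set _) =
      (fun s => monomial s (1 : k)) ''
        {Finsupp.single (0 : Fin 2) q, Finsupp.single (1 : Fin 2) q} := by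
    rw [Set.image_insert_eq, Set.image_singleton, X_pow_eq_monomial, X_pow_eq_monomial]
  rw [hgen, mem_ideal_span_monomial_image]
  constructor
  · intro h m hm hcast
    have hc : ((-1 : k) ^ (m + r) * (r.choose m : k)) ≠ 0 :=
      mul_ne_zero (pow_ne_zero _ (neg_ne_zero.mpr one_ne_zero)) hcast
    have hD : (Finsupp.single (0:Fin 2) (3 * (r - m)) + Finsupp.single 1 (2 * m)) ∈
        (((X 1 : MvPolynomial (Fin 2) k) ^ 2 - X 0 ^ 3) ^ r).support := by
      rw [mem_support_iff, coeff_f_pow r m hm]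
      exact hc
    obtain ⟨si, hsi, hle⟩ := h _ hD
    rcases hsi with h0 | h1
    · left
      subst h0
      have := hle 0
      rwa [D_apply0, Finsupp.single_apply, if_pos rfl] at this
    · right
      rw [Set.mem_singleton_iff] at h1
      subst h1
      have := hle 1
      rwa [D_apply1, Finsupp.single_apply, if_pos rfl] at this
  · intro h xi hxi
    rw [mem_support_iff, f_pow_eq, coeff_sum] at hxi
    obtain ⟨m, hmr, hne⟩ := Finset.exists_ne_zero_of_sum_ne_zero hxi
    rw [coeff_monomial] at hne
    by_cases hD : (Finsupp.single (0:Fin 2) (3 * (r - m)) + Finsupp.single 1 (2 * m)) = xi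
    · have hcne : ((-1 : k) ^ (m + r) * (r.choose m : k)) ≠ 0 := by
        rwa [if_pos hD] at hne
      have hcast : ((r.choose m : k)) ≠ 0 := fun h0 => hcne (by rw [h0, mul_zero])
      have hmr' : m ≤ r := by
        rw [Finset.mem_range] at hmr; omega
      rcases h m hmr' hcast with hq | hq
      · refine ⟨Finsupp.single (0:Fin 2) q, Set.mem_insert _ _, ?_⟩
        rw [Finsupp.single_le_iff, ← hD, D_apply0]
        exact hq
      · refine ⟨Finsupp.single (1:Fin 2) q, Set.mem_insert_of_mem _ rfl, ?_⟩
        rw [Finsupp.single_le_iff, ← hD, D_apply1]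
        exact hq
    · exact absurd (if_neg hD) hne

theorem sSup_eq_of (q N : ℕ)
    (hN : ((X 1 : MvPolynomial (Fin 2) k) ^ 2 - X 0 ^ 3) ^ N ∉
      Ideal.span {(X 0 : MvPolynomial (Fin 2) k) ^ q, X 1 ^ q})
    (hN1 : ((X 1 : MvPolynomial (Fin 2) k) ^ 2 - X 0 ^ 3) ^ (N + 1) ∈
      Ideal.span {(X 0 : MvPolynomial (Fin 2) k) ^ q, X 1 ^ q}) :
    sSup {r : ℕ | ((X 1 : MvPolynomial (Fin 2) k) ^ 2 - X 0 ^ 3) ^ r ∉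
      Ideal.span {(X 0 : MvPolynomial (Fin 2) k) ^ q, X 1 ^ q}} = N := by
  set f : MvPolynomial (Fin 2) k := X 1 ^ 2 - X 0 ^ 3 with hf
  set I := Ideal.span {(X 0 : MvPolynomial (Fin 2) k) ^ q, X 1 ^ q} with hI
  have down : ∀ r r' : ℕ, r ≤ r' → f ^ r' ∉ I → f ^ r ∉ I := by
    intro r r' hrr h hmem
    exact h (by
      rw [show r' = (r' - r) + r by omega, pow_add]
      exact Ideal.mul_mem_left _ _ hmem)
  have hset : {r : ℕ | f ^ r ∉ I} = Set.Iic N := by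
    ext r
    simp only [Set.mem_setOf_eq, Set.mem_Iic]
    constructor
    · intro hr
      by_contra hlt
      exact down (N + 1) r (by omega) hr hN1
    · intro hr
      exact down r N hr hN
  rw [hset, csSup_Iic]

theorem not_mem_iff (p : ℕ) [Fact p.Prime] [CharP k p] (q r : ℕ) :
    ((X 1 : MvPolynomial (Fin 2) k) ^ 2 - X 0 ^ 3) ^ r ∉
        Ideal.span {(X 0 : MvPolynomial (Fin 2) k) ^ q, X 1 ^ q} ↔
      ∃ m, m ≤ r ∧ ¬ p ∣ r.choose m ∧ 3 * (r - m) < q ∧ 2 * m < q := by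
  rw [key_mem]
  push_neg
  constructor
  · rintro ⟨m, hm, hc, h3, h2⟩
    exact ⟨m, hm, fun hd => hc ((CharP.cast_eq_zero_iff k p _).mpr hd), h3, h2⟩
  · rintro ⟨m, hm, hc, h3, h2⟩
    exact ⟨m, hm, fun h0 => hc ((CharP.cast_eq_zero_iff k p _).mp h0), h3, h2⟩

theorem inv_pow_tendsto (p : ℕ) (hp : 1 < p) :
    Tendsto (fun E : ℕ => ((p : ℝ))⁻¹ ^ (E + 1)) atTop (nhds 0) := by
  have h0 : (0:ℝ) ≤ (p:ℝ)⁻¹ := by positivity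
  have h1 : (p:ℝ)⁻¹ < 1 := by
    rw [inv_lt_one_iff₀]
    right
    exact_mod_cast hp
  exact (tendsto_pow_atTop_nhds_zero_of_lt_one h0 h1).comp (Filter.tendsto_add_atTop_nat 1)

theorem tendsto_helper (p b : ℕ) (hp : 1 < p) (hb : 1 ≤ b) :
    Tendsto (fun E : ℕ => ((b * p ^ E - 1 : ℕ) : ℝ) / (p : ℝ) ^ (E + 1)) atTop
      (nhds ((b : ℝ) / p)) := by
  have hp0 : (0:ℝ) < (p:ℝ) := by exact_mod_cast Nat.lt_of_lt_of_le Nat.zero_lt_one hp.le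
  have key : ∀ E : ℕ, ((b * p ^ E - 1 : ℕ) : ℝ) / (p : ℝ) ^ (E + 1) =
      (b:ℝ)/p - ((p:ℝ))⁻¹ ^ (E + 1) := by
    intro E
    have h1 : 1 ≤ b * p ^ E := Nat.one_le_iff_ne_zero.mpr (by positivity)
    rw [Nat.cast_sub h1]
    push_cast
    have hpow : ((p:ℝ)) ^ (E+1) ≠ 0 := by positivity
    rw [inv_pow]
    field_simp
    ring
  rw [show (b:ℝ)/p = (b:ℝ)/p - 0 by ring]
  exact Tendsto.congr (fun E => (key E).symm) (tendsto_const_nhds.sub (inv_pow_tendsto p hp))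

end FptAux

open FptAux

open FptAux in
theorem shifted_case (p : ℕ) [Fact p.Prime] (k : Type*) [Field k] [CharP k p] (b : ℕ)
    (hb1 : 1 ≤ b)
    (hlow : ∀ E : ℕ, ∃ m, m ≤ b * p ^ E - 1 ∧ ¬ p ∣ (b * p ^ E - 1).choose m ∧
      3 * ((b * p ^ E - 1) - m) < p ^ (E + 1) ∧ 2 * m < p ^ (E + 1))
    (hup : ∀ j, j ≤ b → 2 * j < p → 3 * (b - j) < p → False) :
    Filter.Tendsto
      (fun e : ℕ =>
        ((sSup {r : ℕ |
            ((X 1 : MvPolynomial (Fin 2) k) ^ 2 - X 0 ^ 3) ^ r ∉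
              Ideal.span {(X 0 : MvPolynomial (Fin 2) k) ^ p ^ e, X 1 ^ p ^ e}} : ℕ) : ℝ) /
          (p : ℝ) ^ e)
      Filter.atTop (nhds ((b : ℝ) / p)) := by
  have hp : p.Prime := Fact.out
  rw [← Filter.tendsto_add_atTop_iff_nat 1]
  have hbP : ∀ E : ℕ, 1 ≤ b * p ^ E := fun E =>
    Nat.one_le_iff_ne_zero.mpr (Nat.mul_ne_zero (by omega) (pow_pos hp.pos _).ne')
  have hsup : ∀ E : ℕ, sSup {r : ℕ |
      ((X 1 : MvPolynomial (Fin 2) k) ^ 2 - X 0 ^ 3) ^ r ∉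
        Ideal.span {(X 0 : MvPolynomial (Fin 2) k) ^ p ^ (E + 1), X 1 ^ p ^ (E + 1)}} =
      b * p ^ E - 1 := by
    intro E
    apply sSup_eq_of
    · exact (not_mem_iff p _ _).mpr (hlow E)
    · by_contra hc
      rw [show b * p ^ E - 1 + 1 = b * p ^ E by have := hbP E; omega] at hc
      exact upper_gen ‹_› E b hup ((not_mem_iff p _ _).mp hc)
  refine Filter.Tendsto.congr (fun E => ?_) (tendsto_helper p b hp.one_lt hb1)
  rw [hsup E]

/-- The F-pure threshold of the cuspidal cubic `y² = x³`: with
`ν_e = max{ r : f^r ∉ (x^{pᵉ}, y^{pᵉ}) }` for `f = y² − x³`, the limit of `ν_e/pᵉ` exists and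
equals `1/2` if `p = 2`, `2/3` if `p = 3`, `5/6` if `p ≡ 1 (mod 6)`, and `5/6 − 1/(6p)` if
`p ≡ 5 (mod 6)`. -/
theorem fpt_cuspidal_cubic (p : ℕ) [Fact p.Prime] (k : Type*) [Field k] [CharP k p] :
    Tendsto
      (fun e : ℕ =>
        ((sSup {r : ℕ |
            ((X 1 : MvPolynomial (Fin 2) k) ^ 2 - X 0 ^ 3) ^ r ∉
              Ideal.span {(X 0 : MvPolynomial (Fin 2) k) ^ p ^ e, X 1 ^ p ^ e}} : ℕ) : ℝ) /
          (p : ℝ) ^ e)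
      atTop
      (nhds (if p = 2 then 1 / 2 else if p = 3 then 2 / 3
        else if p % 6 = 1 then 5 / 6 else 5 / 6 - 1 / (6 * (p : ℝ)))) := by
  have hp : p.Prime := Fact.out
  by_cases hp2 : p = 2
  · subst hp2
    rw [if_pos rfl]
    have H := shifted_case 2 k 1 le_rfl (fun E => by
      have hP : 1 ≤ 2 ^ E := Nat.one_le_two_pow
      have h21 : 2 ^ (E + 1) = 2 * 2 ^ E := by rw [pow_succ]; ring
      refine ⟨1 * 2 ^ E - 1, le_rfl, ?_, by omega, by omega⟩
      rw [show 1 * 2 ^ E - 1 = 1 * 2 ^ E - 1 from rfl, Nat.choose_self]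
      decide) (fun j h1 h2 h3 => by omega)
    convert H using 2 <;> norm_num
  · by_cases hp3 : p = 3
    · subst hp3
      rw [if_neg (by norm_num), if_pos rfl]
      have H := shifted_case 3 k 2 (by norm_num) (fun E => by
        have hP : 1 ≤ 3 ^ E := Nat.one_le_pow _ _ (by norm_num)
        have h31 : 3 ^ (E + 1) = 3 * 3 ^ E := by rw [pow_succ]; ring
        have hch := lemA (p := 3) ‹_› E 1 1 0 (by norm_num) le_rfl (by omega)
        rw [show 1 * 3 ^ E + (3 ^ E - 1) = 2 * 3 ^ E - 1 by omega,
          show 1 * 3 ^ E + 0 = 3 ^ E by omega] at hch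
        exact ⟨3 ^ E, by omega, hch, by omega, by omega⟩)
        (fun j h1 h2 h3 => by omega)
      convert H using 2 <;> norm_num
    · have h15 : p % 6 = 1 ∨ p % 6 = 5 := by
        have h2 : ¬ 2 ∣ p := fun h => by
          rcases (Nat.Prime.eq_one_or_self_of_dvd hp 2 h) with h' | h' <;> omega
        have h3 : ¬ 3 ∣ p := fun h => by
          rcases (Nat.Prime.eq_one_or_self_of_dvd hp 3 h) with h' | h' <;> omega
        omega
      rcases h15 with h61 | h65
      · -- p ≡ 1 mod 6
        rw [if_neg hp2, if_neg hp3, if_pos h61]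
        obtain ⟨t, hpt⟩ : ∃ t, p = 6 * t + 1 := ⟨p / 6, by omega⟩
        have ht1 : 1 ≤ t := by have := hp.two_le; omega
        have hsup : ∀ e : ℕ, sSup {r : ℕ |
            ((X 1 : MvPolynomial (Fin 2) k) ^ 2 - X 0 ^ 3) ^ r ∉
              Ideal.span {(X 0 : MvPolynomial (Fin 2) k) ^ p ^ e, X 1 ^ p ^ e}} =
            5 * t * rep p e := by
          intro e
          have hrep := rep_mul p (by omega) e
          have h6 : 6 * (t * rep p e) + 1 = p ^ e := by
            calc 6 * (t * rep p e) + 1 = (6 * t) * rep p e + 1 := by ring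
              _ = (p - 1) * rep p e + 1 := by rw [show 6 * t = p - 1 by omega]
              _ = p ^ e := hrep
          have e1 : 5 * t * rep p e = 5 * (t * rep p e) := by ring
          apply sSup_eq_of
          · rw [not_mem_iff p]
            have hch := lemB ‹_› e (5 * t) (3 * t) (by omega) (by omega)
            rw [show (5 * t) * rep p e = 5 * t * rep p e by ring,
              show (3 * t) * rep p e = 3 * (t * rep p e) by ring] at hch
            exact ⟨3 * (t * rep p e), by omega, hch, by omega, by omega⟩
          · by_contra hc
            obtain ⟨m, hm, _, h3, h2⟩ := (not_mem_iff p _ _).mp hc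
            omega
        have key : ∀ e : ℕ, ((5 * t * rep p e : ℕ) : ℝ) / (p : ℝ) ^ e =
            5 / 6 - 5 / 6 * ((p : ℝ))⁻¹ ^ e := by
          intro e
          have hrep := rep_mul p (by omega) e
          have h6 : 6 * (t * rep p e) + 1 = p ^ e := by
            calc 6 * (t * rep p e) + 1 = (6 * t) * rep p e + 1 := by ring
              _ = (p - 1) * rep p e + 1 := by rw [show 6 * t = p - 1 by omega]
              _ = p ^ e := hrep
          have h6R : 6 * ((t * rep p e : ℕ) : ℝ) + 1 = (p : ℝ) ^ e := by
            exact_mod_cast congrArg (fun n : ℕ => (n : ℝ)) h6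
          have hT0 : (0:ℝ) ≤ ((t * rep p e : ℕ) : ℝ) := Nat.cast_nonneg _
          have hne : (6 : ℝ) * ((t * rep p e : ℕ) : ℝ) + 1 ≠ 0 := by positivity
          rw [inv_pow, ← h6R, show ((5 * t * rep p e : ℕ) : ℝ) =
            5 * ((t * rep p e : ℕ) : ℝ) by push_cast; ring]
          field_simp
          ring
        have H : Tendsto (fun e : ℕ => 5 / 6 - 5 / 6 * ((p : ℝ))⁻¹ ^ e) atTop
            (nhds (5 / 6 : ℝ)) := by
          have h0 : (0:ℝ) ≤ (p:ℝ)⁻¹ := by positivity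
          have h1 : (p:ℝ)⁻¹ < 1 := by
            rw [inv_lt_one_iff₀]; right; exact_mod_cast hp.one_lt
          have := Filter.Tendsto.const_sub (5/6 : ℝ)
            ((tendsto_pow_atTop_nhds_zero_of_lt_one h0 h1).const_mul (5/6 : ℝ))
          simpa using this
        refine Tendsto.congr (fun e => ?_) H
        rw [hsup e, key e]
      · -- p ≡ 5 mod 6
        have h61 : ¬ p % 6 = 1 := by omega
        rw [if_neg hp2, if_neg hp3, if_neg h61]
        obtain ⟨t, hpt⟩ : ∃ t, p = 6 * t + 5 := ⟨p / 6, by omega⟩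
        have H := shifted_case p k (5 * t + 4) (by omega) (fun E => by
          have hoddp : Odd p := Nat.odd_iff.mpr (by omega)
          obtain ⟨u, hu⟩ := hoddp.pow (n := E)
          have hch := lemA ‹_› E (5 * t + 3) (3 * t + 2) u (by omega) (by omega) (by omega)
          have key1 : (5 * t + 4) * p ^ E = (5 * t + 3) * p ^ E + p ^ E := by ring
          rw [show (5 * t + 3) * p ^ E + (p ^ E - 1) = (5 * t + 4) * p ^ E - 1 by omega] at hch
          have f1 : (5 * t + 4) * p ^ E = 10 * (t * u) + 5 * t + 8 * u + 4 := by
            rw [hu]; ring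
          have f2 : (3 * t + 2) * p ^ E = 6 * (t * u) + 3 * t + 4 * u + 2 := by
            rw [hu]; ring
          have f3 : p ^ (E + 1) = 12 * (t * u) + 6 * t + 10 * u + 5 := by
            rw [pow_succ, hu, hpt]; ring
          exact ⟨(3 * t + 2) * p ^ E + u, by omega, hch, by omega, by omega⟩)
          (fun j h1 h2 h3 => by omega)
        convert H using 2
        have hpR : (p : ℝ) = 6 * (t : ℝ) + 5 := by rw [hpt]; push_cast; ring
        have hne : (6 * (t : ℝ) + 5) ≠ 0 := by positivity
        rw [hpR]
        push_cast
        field_simp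
        ring
end

section
/- Let k be a perfect field of characteristic 2, let R = k[x,y,t]/(x² − t·y²), and let Q ⊂ R be the prime ideal generated by the images of x and y. Then the localization R_Q is not F-pure: there is no additive map φ : R_Q → R_Q satisfying φ(r² s) = r φ(s) for all r, s ∈ R_Q and φ(1) = 1. In other words, in characteristic 2 the pinch point fails to be F-pure along the entire double line x = y = 0. -/
set_option maxHeartbeats 2000000
set_option synthInstance.maxHeartbeats 1000000

open MvPolynomial

noncomputable def piA (k : Type*) [Field k] : MvPolynomial (Fin 3) k →ₐ[k] Polynomial k :=
  aeval ![0, 0, Polynomial.X]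

lemma piA_sub_mem {k : Type*} [Field k] (p : MvPolynomial (Fin 3) k) :
    p - Polynomial.eval₂ (MvPolynomial.C : k →+* _) (X 2) (piA k p) ∈
      Ideal.span {(X 0 : MvPolynomial (Fin 3) k), X 1} := by
  induction p using MvPolynomial.induction_on with
  | C a => simp [piA]
  | add p q hp hq =>
      have h := Ideal.add_mem _ hp hq
      rw [map_add, Polynomial.eval₂_add]
      convert h using 1
      ring
  | mul_X p n hp =>
      fin_cases n
      · show p * X 0 - Polynomial.eval₂ (MvPolynomial.C : k →+* _) (X 2) (piA k (p * X 0)) ∈ _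
        have h0 : piA k (p * X 0) = 0 := by simp [piA]
        rw [h0]
        simpa using Ideal.mul_mem_left _ p
          (Ideal.subset_span (by simp) : (X 0 : MvPolynomial (Fin 3) k) ∈ _)
      · show p * X 1 - Polynomial.eval₂ (MvPolynomial.C : k →+* _) (X 2) (piA k (p * X 1)) ∈ _
        have h0 : piA k (p * X 1) = 0 := by simp [piA]
        rw [h0]
        simpa using Ideal.mul_mem_left _ p
          (Ideal.subset_span (by simp) : (X 1 : MvPolynomial (Fin 3) k) ∈ _)
      · show p * X 2 - Polynomial.eval₂ (MvPolynomial.C : k →+* _) (X 2) (piA k (p * X 2)) ∈ _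
        have h0 : p * X 2 - Polynomial.eval₂ (MvPolynomial.C : k →+* _) (X 2) (piA k (p * X 2))
            = (p - Polynomial.eval₂ (MvPolynomial.C : k →+* _) (X 2) (piA k p)) * X 2 := by
          have : piA k (p * X 2) = piA k p * Polynomial.X := by simp [piA]
          rw [this, Polynomial.eval₂_mul, Polynomial.eval₂_X]
          ring
        rw [h0]
        exact Ideal.mul_mem_right _ _ hp

lemma mem_span_X01_iff {k : Type*} [Field k] (p : MvPolynomial (Fin 3) k) :
    p ∈ Ideal.span {(X 0 : MvPolynomial (Fin 3) k), X 1} ↔ piA k p = 0 := by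
  constructor
  · intro hp
    have hle : Ideal.span {(X 0 : MvPolynomial (Fin 3) k), X 1} ≤
        RingHom.ker (piA k).toRingHom := by
      rw [Ideal.span_le]
      rintro q (rfl | rfl) <;> simp [RingHom.mem_ker, piA]
    simpa [RingHom.mem_ker] using hle hp
  · intro h
    have := piA_sub_mem (k := k) p
    rw [h] at this
    simpa using this


theorem pinch_aux (k : Type*) [Field k] (f : MvPolynomial (Fin 3) k)
    (hf : f = X 0 ^ 2 - X 2 * X 1 ^ 2)
    (I : Ideal (MvPolynomial (Fin 3) k)) (hI : I = Ideal.span {f})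
    (Q : Ideal (MvPolynomial (Fin 3) k ⧸ I))
    (hQdef : Q = Ideal.span {Ideal.Quotient.mk I (X 0), Ideal.Quotient.mk I (X 1)}) :
    Q.IsPrime ∧ ∀ (hQ : Q.IsPrime),
      letI := hQ
      ¬ ∃ φ : Localization.AtPrime Q → Localization.AtPrime Q,
        (∀ x y, φ (x + y) = φ x + φ y) ∧
        (∀ r s, φ (r ^ 2 * s) = r * φ s) ∧ φ 1 = 1 := by
  -- the map to k[t]
  have hpif : piA k f = 0 := by simp [hf, piA]
  have hIker : ∀ a ∈ I, (piA k).toRingHom a = 0 := by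
    intro a ha
    rw [hI] at ha
    obtain ⟨g, rfl⟩ := Ideal.mem_span_singleton.mp ha
    simp [map_mul, hpif]
  let pibar : MvPolynomial (Fin 3) k ⧸ I →+* Polynomial k :=
    Ideal.Quotient.lift I (piA k).toRingHom hIker
  have hQker : Q = RingHom.ker pibar := by
    ext q
    constructor
    · intro hq
      rw [hQdef] at hq
      obtain ⟨a, b, rfl⟩ := Ideal.mem_span_pair.mp hq
      rw [RingHom.mem_ker]
      obtain ⟨a', rfl⟩ := Ideal.Quotient.mk_surjective a
      obtain ⟨b', rfl⟩ := Ideal.Quotient.mk_surjective b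
      simp only [pibar, map_add, map_mul, Ideal.Quotient.lift_mk]
      simp [piA]
    · intro hq
      obtain ⟨p, rfl⟩ := Ideal.Quotient.mk_surjective q
      have hp0 : piA k p = 0 := by
        simpa [pibar, Ideal.Quotient.lift_mk] using RingHom.mem_ker.mp hq
      obtain ⟨a, b, rfl⟩ := Ideal.mem_span_pair.mp ((mem_span_X01_iff p).mpr hp0)
      rw [hQdef]
      exact Ideal.mem_span_pair.mpr
        ⟨Ideal.Quotient.mk I a, Ideal.Quotient.mk I b,
          by rw [← map_mul, ← map_mul, ← map_add]⟩
  have hQprime : Q.IsPrime := hQker ▸ RingHom.ker_isPrime pibar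
  refine ⟨hQprime, ?_⟩
  intro hQ
  rintro ⟨φ, -, hlin, hone⟩
  let A : MvPolynomial (Fin 3) k ⧸ I →+* Localization.AtPrime Q :=
    algebraMap (MvPolynomial (Fin 3) k ⧸ I) (Localization.AtPrime Q)
  have hmkf : Ideal.Quotient.mk I f = 0 :=
    Ideal.Quotient.eq_zero_iff_mem.mpr (hI ▸ Ideal.mem_span_singleton_self f)
  have hq2 : (Ideal.Quotient.mk I (X 0)) ^ 2
      = (Ideal.Quotient.mk I (X 1)) ^ 2 * Ideal.Quotient.mk I (X 2) := by
    have h0 : Ideal.Quotient.mk I (X 0 ^ 2 - X 2 * X 1 ^ 2) = 0 := by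
      rw [← hf]; exact hmkf
    rw [map_sub, map_mul, map_pow, map_pow, sub_eq_zero] at h0
    rw [h0]; ring
  have hx2 : A (Ideal.Quotient.mk I (X 0)) ^ 2
      = A (Ideal.Quotient.mk I (X 1)) ^ 2 * A (Ideal.Quotient.mk I (X 2)) := by
    have h := congrArg A hq2
    rw [map_pow, map_mul, map_pow] at h
    exact h
  have key : A (Ideal.Quotient.mk I (X 0))
      = A (Ideal.Quotient.mk I (X 1)) * φ (A (Ideal.Quotient.mk I (X 2))) := by
    have h1 : φ (A (Ideal.Quotient.mk I (X 0)) ^ 2 * 1) = A (Ideal.Quotient.mk I (X 0)) := by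
      rw [hlin, hone, mul_one]
    rw [mul_one, hx2, hlin] at h1
    exact h1.symm
  obtain ⟨⟨a, s⟩, hsa⟩ := IsLocalization.mk'_surjective Q.primeCompl
    (φ (A (Ideal.Quotient.mk I (X 2))))
  dsimp only at hsa
  have h3 : A (Ideal.Quotient.mk I (X 0) * ↑s) = A (Ideal.Quotient.mk I (X 1) * a) := by
    rw [map_mul, map_mul, key, ← hsa, mul_assoc, IsLocalization.mk'_spec]
  obtain ⟨u, hu⟩ := (IsLocalization.eq_iff_exists Q.primeCompl _).mp h3
  obtain ⟨Cp, hCp⟩ := Ideal.Quotient.mk_surjective ((↑u * ↑s : MvPolynomial (Fin 3) k ⧸ I))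
  obtain ⟨Bp, hBp⟩ := Ideal.Quotient.mk_surjective ((↑u * a : MvPolynomial (Fin 3) k ⧸ I))
  have hmem : Cp * X 0 - X 1 * Bp ∈ I := by
    apply Ideal.Quotient.eq_zero_iff_mem.mp
    rw [map_sub, map_mul, map_mul, hCp, hBp]
    linear_combination hu
  rw [hI] at hmem
  obtain ⟨G, hG⟩ := Ideal.mem_span_singleton.mp hmem
  have hCnot : piA k Cp ≠ 0 := by
    intro h0
    obtain ⟨α, β, hab⟩ := Ideal.mem_span_pair.mp ((mem_span_X01_iff Cp).mpr h0)
    have hmemQ : (↑u * ↑s : MvPolynomial (Fin 3) k ⧸ I) ∈ Q := by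
      rw [← hCp, ← hab, hQdef]
      exact Ideal.mem_span_pair.mpr
        ⟨Ideal.Quotient.mk I α, Ideal.Quotient.mk I β,
          by rw [← map_mul, ← map_mul, ← map_add]⟩
    exact (Submonoid.mul_mem _ u.2 s.2 : (↑u * ↑s : MvPolynomial (Fin 3) k ⧸ I) ∈ Q.primeCompl)
      hmemQ
  -- first substitution : x ↦ s*y, y ↦ y, t ↦ s^2
  let e1 : MvPolynomial (Fin 3) k →ₐ[k] MvPolynomial (Fin 2) k :=
    aeval ![X 1 * X 0, X 0, X 1 ^ 2]
  have he1f : e1 f = 0 := by simp [hf, e1]; ring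
  have h4 := congrArg e1 hG
  rw [map_sub, map_mul, map_mul, map_mul, he1f, zero_mul] at h4
  have he1X0 : e1 (X 0) = X 1 * X 0 := by simp [e1]
  have he1X1 : e1 (X 1) = X 0 := by simp [e1]
  rw [he1X0, he1X1] at h4
  have h5 : (X 0 : MvPolynomial (Fin 2) k) * (X 1 * e1 Cp - e1 Bp) = 0 := by
    linear_combination h4
  have h6 : (X 1 : MvPolynomial (Fin 2) k) * e1 Cp = e1 Bp := by
    rcases mul_eq_zero.mp h5 with h | h
    · exact absurd h (MvPolynomial.X_ne_zero _)
    · exact sub_eq_zero.mp h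
  -- second substitution : y ↦ 0, s ↦ X
  let e2 : MvPolynomial (Fin 2) k →ₐ[k] Polynomial k := aeval ![0, Polynomial.X]
  have hcomp : ∀ p, e2 (e1 p) = Polynomial.expand k 2 (piA k p) := by
    intro p
    have hhoms : (e2.comp e1) = ((Polynomial.expand k 2).comp (piA k)) := by
      apply MvPolynomial.algHom_ext
      intro i
      fin_cases i <;>
        simp [e1, e2, piA, Polynomial.expand_X]
    exact DFunLike.congr_fun hhoms p
  have hfin : Polynomial.X * Polynomial.expand k 2 (piA k Cp)
      = Polynomial.expand k 2 (piA k Bp) := by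
    have h7 := congrArg e2 h6
    rw [map_mul, hcomp, hcomp] at h7
    have he2X1 : e2 (X 1) = Polynomial.X := by simp [e2]
    rwa [he2X1] at h7
  have hcexp : Polynomial.expand k 2 (piA k Cp) ≠ 0 :=
    fun h => hCnot ((Polynomial.expand_eq_zero two_pos).mp h)
  have hbne : piA k Bp ≠ 0 := by
    intro h
    rw [h, map_zero] at hfin
    exact (mul_ne_zero Polynomial.X_ne_zero hcexp) hfin
  have hdeg := congrArg Polynomial.natDegree hfin
  rw [Polynomial.natDegree_mul Polynomial.X_ne_zero hcexp, Polynomial.natDegree_X,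
    Polynomial.natDegree_expand, Polynomial.natDegree_expand] at hdeg
  omega

/-- In characteristic 2 the pinch point `R = k[x,y,t]/(x² − t y²)` is not F-pure along the
double line: the prime `Q = (x, y)` is prime, and the localization `R_Q` admits no
`2⁻¹`-linear map `φ` with `φ 1 = 1`. -/
theorem pinch_point_not_Fpure (k : Type*) [Field k] [CharP k 2] [PerfectRing k 2] :
    (Ideal.span {Ideal.Quotient.mk
        (Ideal.span {(X 0 : MvPolynomial (Fin 3) k) ^ 2 - X 2 * X 1 ^ 2}) (X 0),
      Ideal.Quotient.mk
        (Ideal.span {(X 0 : MvPolynomial (Fin 3) k) ^ 2 - X 2 * X 1 ^ 2}) (X 1)}).IsPrime ∧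
    ∀ (hQ : (Ideal.span {Ideal.Quotient.mk
        (Ideal.span {(X 0 : MvPolynomial (Fin 3) k) ^ 2 - X 2 * X 1 ^ 2}) (X 0),
      Ideal.Quotient.mk
        (Ideal.span {(X 0 : MvPolynomial (Fin 3) k) ^ 2 - X 2 * X 1 ^ 2}) (X 1)}).IsPrime),
      letI := hQ
      ¬ ∃ φ : Localization.AtPrime (Ideal.span {Ideal.Quotient.mk
            (Ideal.span {(X 0 : MvPolynomial (Fin 3) k) ^ 2 - X 2 * X 1 ^ 2}) (X 0),
          Ideal.Quotient.mk
            (Ideal.span {(X 0 : MvPolynomial (Fin 3) k) ^ 2 - X 2 * X 1 ^ 2}) (X 1)}) →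
          Localization.AtPrime (Ideal.span {Ideal.Quotient.mk
            (Ideal.span {(X 0 : MvPolynomial (Fin 3) k) ^ 2 - X 2 * X 1 ^ 2}) (X 0),
          Ideal.Quotient.mk
            (Ideal.span {(X 0 : MvPolynomial (Fin 3) k) ^ 2 - X 2 * X 1 ^ 2}) (X 1)}),
        (∀ x y, φ (x + y) = φ x + φ y) ∧
        (∀ r s, φ (r ^ 2 * s) = r * φ s) ∧ φ 1 = 1 := by
  exact pinch_aux k _ rfl _ rfl _ rfl
end

section
/- Let p be a prime and R a Noetherian F-finite integral domain of characteristic p that is strongly F-regular, and let W ⊆ R be a multiplicative set with 0 ∉ W. Then the localization W⁻¹R is strongly F-regular: for every c ∈ W⁻¹R with c ≠ 0 there exist an integer e ≥ 1 and a p^{-e}-linear map φ : W⁻¹R → W⁻¹R with φ(c) = 1. -/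
namespace SFRAux

variable {R : Type*} [CommRing R] {W : Submonoid R}

/-- Extension of a `p^{-e}`-linear map to the localization. -/
noncomputable def psi (φ : R → R) (m : ℕ)
    (hlin : ∀ r x : R, φ (r ^ (m + 1) * x) = r * φ x) :
    Localization W → Localization W := fun z =>
  Localization.liftOn z (fun a s => Localization.mk (φ (a * (s : R) ^ m)) s) (by
    intro a c b d h
    rw [Localization.r_iff_exists] at h
    obtain ⟨u, hu⟩ := h
    rw [Localization.mk_eq_mk_iff, Localization.r_iff_exists]
    refine ⟨u, ?_⟩
    have e1 : (u : R) * ((d : R) * φ (a * (b : R) ^ m))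
        = φ (((u : R) * d) ^ (m + 1) * (a * (b : R) ^ m)) := by
      rw [hlin]; ring
    have e2 : (u : R) * ((b : R) * φ (c * (d : R) ^ m))
        = φ (((u : R) * b) ^ (m + 1) * (c * (d : R) ^ m)) := by
      rw [hlin]; ring
    have key : ((u : R) * d) ^ (m + 1) * (a * (b : R) ^ m)
        = ((u : R) * b) ^ (m + 1) * (c * (d : R) ^ m) := by
      have h1 : ((u : R) * d) ^ (m + 1) * (a * (b : R) ^ m)
          = ((u : R) * d * b) ^ m * ((u : R) * ((d : R) * a)) := by ring
      have h2 : ((u : R) * b) ^ (m + 1) * (c * (d : R) ^ m)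
          = ((u : R) * d * b) ^ m * ((u : R) * ((b : R) * c)) := by ring
      rw [h1, h2, hu]
    rw [e1, e2, key])

theorem psi_mk (φ : R → R) (m : ℕ)
    (hlin : ∀ r x : R, φ (r ^ (m + 1) * x) = r * φ x) (a : R) (s : W) :
    psi φ m hlin (Localization.mk a s) = Localization.mk (φ (a * (s : R) ^ m)) s :=
  Localization.liftOn_mk _ _ _ _

theorem psi_add (φ : R → R) (m : ℕ)
    (hadd : ∀ x y : R, φ (x + y) = φ x + φ y)
    (hlin : ∀ r x : R, φ (r ^ (m + 1) * x) = r * φ x)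
    (x y : Localization W) : psi φ m hlin (x + y) = psi φ m hlin x + psi φ m hlin y := by
  refine Localization.induction_on₂ x y ?_
  rintro ⟨a, s⟩ ⟨b, t⟩
  rw [Localization.add_mk, psi_mk, psi_mk, psi_mk, Localization.add_mk]
  congr 1
  have h1 : ((s : R) * b + (t : R) * a) * ((s * t : W) : R) ^ m
      = (s : R) ^ (m + 1) * (b * (t : R) ^ m) + (t : R) ^ (m + 1) * (a * (s : R) ^ m) := by
    push_cast; ring
  rw [h1, hadd, hlin, hlin]

theorem psi_lin (φ : R → R) (m : ℕ)
    (hlin : ∀ r x : R, φ (r ^ (m + 1) * x) = r * φ x)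
    (r x : Localization W) : psi φ m hlin (r ^ (m + 1) * x) = r * psi φ m hlin x := by
  refine Localization.induction_on₂ r x ?_
  rintro ⟨c, u⟩ ⟨a, s⟩
  rw [Localization.mk_pow, Localization.mk_mul, psi_mk, psi_mk, Localization.mk_mul,
    Localization.mk_eq_mk_iff, Localization.r_iff_exists]
  refine ⟨1, ?_⟩
  have harg : c ^ (m + 1) * a * ((u ^ (m + 1) * s : W) : R) ^ m
      = (c * (u : R) ^ m) ^ (m + 1) * (a * (s : R) ^ m) := by
    push_cast; ring
  rw [harg, hlin]
  push_cast; ring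

end SFRAux

/-- A localization of a strongly F-regular Noetherian F-finite domain of characteristic `p`
at a multiplicative set not containing `0` is strongly F-regular. -/
theorem stronglyFRegular_localization (p : ℕ) [Fact p.Prime] (R : Type*) [CommRing R]
    [IsDomain R] [IsNoetherianRing R] [CharP R p]
    (hFF : (frobenius R p).Finite)
    (hSFR : ∀ c : R, c ≠ 0 → ∃ e : ℕ, 1 ≤ e ∧ ∃ φ : R → R,
      (∀ x y : R, φ (x + y) = φ x + φ y) ∧
      (∀ r x : R, φ (r ^ p ^ e * x) = r * φ x) ∧ φ c = 1)
    (W : Submonoid R) (hW : (0 : R) ∉ W) :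
    ∀ c : Localization W, c ≠ 0 → ∃ e : ℕ, 1 ≤ e ∧ ∃ φ : Localization W → Localization W,
      (∀ x y : Localization W, φ (x + y) = φ x + φ y) ∧
      (∀ r x : Localization W, φ (r ^ p ^ e * x) = r * φ x) ∧ φ c = 1 := by
  intro c hc
  induction c using Localization.induction_on with
  | H y =>
    obtain ⟨a, s⟩ := y
    simp only at hc ⊢
    have ha : a ≠ 0 := by
      rintro rfl
      exact hc (Localization.mk_zero s)
    obtain ⟨e, he, φ, hadd, hlin, hone⟩ := hSFR a ha
    -- write p ^ e = m + 1
    obtain ⟨m, hm⟩ : ∃ m : ℕ, p ^ e = m + 1 :=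
      ⟨p ^ e - 1, (Nat.succ_pred_eq_of_pos (pow_pos (Fact.out : p.Prime).pos e)).symm⟩
    rw [hm] at hlin
    refine ⟨e, he, fun x => SFRAux.psi φ m hlin (Localization.mk (s : R) 1 * x), ?_, ?_, ?_⟩
    · intro x y
      dsimp only
      rw [mul_add, SFRAux.psi_add φ m hadd hlin]
    · intro r x
      dsimp only
      rw [hm]
      have : Localization.mk (s : R) 1 * (r ^ (m + 1) * x)
          = r ^ (m + 1) * (Localization.mk (s : R) 1 * x) := by ring
      rw [this, SFRAux.psi_lin]
    · have h1 : Localization.mk (s : R) 1 * Localization.mk a s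
          = Localization.mk ((s : R) * a) (1 * s) := Localization.mk_mul _ _ _ _
      dsimp only
      rw [h1, SFRAux.psi_mk]
      have h2 : (s : R) * a * ((1 * s : W) : R) ^ m = (s : R) ^ (m + 1) * a := by
        push_cast; ring
      rw [h2, hlin, hone, mul_one, one_mul, Localization.mk_self]
end
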